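/- arXiv:1704.06481 — 6 statements merged into one kernel-verified Lean document; each statement's English description precedes it below -/
import Mathlib

section
/- Let m : Σ → X be a countably additive vector measure with values in a Banach space X. For every m-integrable function f, ‖f‖_{L¹(m)} = sup_{A ∈ Σ} ‖∫ f·h_A dm‖_X, where h_A = χ_A − χ_{A^c}. -/
open MeasureTheory Filter

noncomputable def scal {Ω : Type*} [MeasurableSpace Ω] {X : Type*} [NormedAddCommGroup X]
    [NormedSpace ℝ X] (m : VectorMeasure Ω X) (x : X →L[ℝ] ℝ) : SignedMeasure Ω :=
  m.mapRange x.toLinearMap.toAddMonoidHom x.continuous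

noncomputable def sint {Ω : Type*} [MeasurableSpace Ω] (s : SignedMeasure Ω) (f : Ω → ℝ) : ℝ :=
  ∫ ω, f ω ∂s.toJordanDecomposition.posPart - ∫ ω, f ω ∂s.toJordanDecomposition.negPart

open Classical in
noncomputable def hS {Ω : Type*} (A : Set Ω) : Ω → ℝ := fun ω => if ω ∈ A then (1 : ℝ) else -1

/-- The scalar part of `m`-integrability: integrable w.r.t. every scalarization. -/
def MemL1 {Ω : Type*} [MeasurableSpace Ω] {X : Type*} [NormedAddCommGroup X]
    [NormedSpace ℝ X] (m : VectorMeasure Ω X) (f : Ω → ℝ) : Prop :=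
  ∀ x : X →L[ℝ] ℝ, Integrable f (scal m x).totalVariation

noncomputable def l1norm {Ω : Type*} [MeasurableSpace Ω] {X : Type*} [NormedAddCommGroup X]
    [NormedSpace ℝ X] (m : VectorMeasure Ω X) (f : Ω → ℝ) : ℝ :=
  ⨆ x : {x : X →L[ℝ] ℝ // ‖x‖ ≤ 1}, ∫ ω, |f ω| ∂(scal m x.1).totalVariation

/-- `‖f‖_{L¹(m)} = sup_{A ∈ Σ} ‖∫ f·h_A dm‖`, where `h_A = χ_A − χ_{Aᶜ}`. -/
theorem stmt2 {Ω X : Type*} [MeasurableSpace Ω] [NormedAddCommGroup X] [NormedSpace ℝ X]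
    [CompleteSpace X]
    (m : VectorMeasure Ω X) (f : Ω → ℝ)
    (hint : MemL1 m f)
    -- `I A = ∫ f·h_A dm`, characterized through the scalarizations of `m`:
    (I : Set Ω → X)
    (hI : ∀ A : Set Ω, MeasurableSet A → ∀ x : X →L[ℝ] ℝ,
      x (I A) = sint (scal m x) (fun ω => f ω * hS A ω)) :
    l1norm m f = ⨆ A : {A : Set Ω // MeasurableSet A}, ‖I A.1‖ := by
  classical
  have key2 : ∀ x : {x : X →L[ℝ] ℝ // ‖x‖ ≤ 1},
      ∃ A : {A : Set Ω // MeasurableSet A},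
        ∫ ω, |f ω| ∂(scal m x.1).totalVariation ≤ ‖I A.1‖ := by
    rintro ⟨x, hx⟩
    set s := scal m x with hs
    set P := s.toJordanDecomposition.posPart with hP
    set N := s.toJordanDecomposition.negPart with hN
    have htv : s.totalVariation = P + N := rfl
    have hfInt : Integrable f (P + N) := by rw [← htv]; exact hint x
    have hfP : Integrable f P := hfInt.mono_measure (Measure.le_add_right le_rfl)
    have hfN : Integrable f N := hfInt.mono_measure (Measure.le_add_left le_rfl)
    obtain ⟨u, hu, huP, huN⟩ := s.toJordanDecomposition.mutuallySingular
    obtain ⟨g, hgm, hfg⟩ := hfInt.aestronglyMeasurable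
    have hfgP : f =ᵐ[P] g := (ae_add_measure_iff.mp hfg).1
    have hfgN : f =ᵐ[N] g := (ae_add_measure_iff.mp hfg).2
    set A : Set Ω := (uᶜ ∩ {ω | 0 ≤ g ω}) ∪ (u ∩ {ω | g ω < 0}) with hA
    have hAmeas : MeasurableSet A :=
      (hu.compl.inter (measurableSet_le measurable_const hgm.measurable)).union
        (hu.inter (measurableSet_lt hgm.measurable measurable_const))
    have haeP : (fun ω => f ω * hS A ω) =ᵐ[P] fun ω => |f ω| := by
      have hu' : ∀ᵐ ω ∂P, ω ∉ u := by
        rw [ae_iff]; simpa using huP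
      filter_upwards [hfgP, hu'] with ω hfω hωu
      by_cases hg : 0 ≤ g ω
      · have hωA : ω ∈ A := Or.inl ⟨hωu, hg⟩
        rw [hS, if_pos hωA, mul_one, abs_of_nonneg (hfω ▸ hg)]
      · have hωA : ω ∉ A := by
          rintro (⟨-, h2⟩ | ⟨h1, -⟩); exact hg h2; exact hωu h1
        rw [hS, if_neg hωA, mul_neg_one,
          abs_of_neg (hfω ▸ (not_le.mp hg))]
    have haeN : (fun ω => f ω * hS A ω) =ᵐ[N] fun ω => -|f ω| := by
      have hu' : ∀ᵐ ω ∂N, ω ∈ u := by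
        rw [ae_iff]; exact huN
      filter_upwards [hfgN, hu'] with ω hfω hωu
      by_cases hg : 0 ≤ g ω
      · have hωA : ω ∉ A := by
          rintro (⟨h1, -⟩ | ⟨-, h2⟩); exact h1 hωu; exact (not_le.mpr h2) hg
        rw [hS, if_neg hωA, mul_neg_one, abs_of_nonneg (hfω ▸ hg)]
      · have hωA : ω ∈ A := Or.inr ⟨hωu, not_le.mp hg⟩
        rw [hS, if_pos hωA, mul_one, abs_of_neg (hfω ▸ (not_le.mp hg)), neg_neg]
    refine ⟨⟨A, hAmeas⟩, ?_⟩
    have hxI : x (I A) = ∫ ω, |f ω| ∂s.totalVariation := by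
      rw [hI A hAmeas x, htv,
        integral_add_measure hfP.abs hfN.abs]
      show (∫ ω, f ω * hS A ω ∂P) - (∫ ω, f ω * hS A ω ∂N) = _
      rw [integral_congr_ae haeP, integral_congr_ae haeN, integral_neg, sub_neg_eq_add]
    calc ∫ ω, |f ω| ∂s.totalVariation = x (I A) := hxI.symm
      _ ≤ ‖x (I A)‖ := le_abs_self _
      _ ≤ ‖x‖ * ‖I A‖ := x.le_opNorm _
      _ ≤ 1 * ‖I A‖ := by gcongr
      _ = ‖I A‖ := one_mul _
  have key1 : ∀ A : {A : Set Ω // MeasurableSet A},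
      ∃ x : {x : X →L[ℝ] ℝ // ‖x‖ ≤ 1},
        ‖I A.1‖ ≤ ∫ ω, |f ω| ∂(scal m x.1).totalVariation := by
    rintro ⟨A, hAmeas⟩
    obtain ⟨x, hx1, hxI⟩ := exists_dual_vector'' ℝ (I A)
    refine ⟨⟨x, hx1⟩, ?_⟩
    set s := scal m x with hs
    set P := s.toJordanDecomposition.posPart with hP
    set N := s.toJordanDecomposition.negPart with hN
    have htv : s.totalVariation = P + N := rfl
    have hfInt : Integrable f (P + N) := by rw [← htv]; exact hint x
    have hfP : Integrable f P := hfInt.mono_measure (Measure.le_add_right le_rfl)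
    have hfN : Integrable f N := hfInt.mono_measure (Measure.le_add_left le_rfl)
    have habs : ∀ ω, |f ω * hS A ω| = |f ω| := by
      intro ω
      rw [hS, abs_mul]
      by_cases h : ω ∈ A <;> simp [h]
    have h1 : |∫ ω, f ω * hS A ω ∂P| ≤ ∫ ω, |f ω| ∂P := by
      calc |∫ ω, f ω * hS A ω ∂P| ≤ ∫ ω, |f ω * hS A ω| ∂P := by simpa only [Real.norm_eq_abs] using norm_integral_le_integral_norm (μ := P) (fun ω => f ω * hS A ω)
        _ = ∫ ω, |f ω| ∂P := by simp_rw [habs]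
    have h2 : |∫ ω, f ω * hS A ω ∂N| ≤ ∫ ω, |f ω| ∂N := by
      calc |∫ ω, f ω * hS A ω ∂N| ≤ ∫ ω, |f ω * hS A ω| ∂N := by simpa only [Real.norm_eq_abs] using norm_integral_le_integral_norm (μ := N) (fun ω => f ω * hS A ω)
        _ = ∫ ω, |f ω| ∂N := by simp_rw [habs]
    have hxval : ‖I A‖ = x (I A) := by exact_mod_cast hxI.symm
    calc ‖I A‖ = x (I A) := hxval
      _ = sint s (fun ω => f ω * hS A ω) := hI A hAmeas x
      _ = (∫ ω, f ω * hS A ω ∂P) - (∫ ω, f ω * hS A ω ∂N) := rfl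
      _ ≤ |∫ ω, f ω * hS A ω ∂P| + |∫ ω, f ω * hS A ω ∂N| :=
          (sub_le_iff_le_add.mpr (le_trans (le_abs_self _) (by linarith [neg_abs_le (∫ ω, f ω * hS A ω ∂N)])))
      _ ≤ (∫ ω, |f ω| ∂P) + ∫ ω, |f ω| ∂N := add_le_add h1 h2
      _ = ∫ ω, |f ω| ∂s.totalVariation := by
          rw [htv, integral_add_measure hfP.abs hfN.abs]
  rw [l1norm, iSup, iSup]
  apply csSup_eq_csSup_of_forall_exists_le
  · rintro v ⟨x, rfl⟩
    obtain ⟨A, hle⟩ := key2 x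
    exact ⟨‖I A.1‖, ⟨A, rfl⟩, hle⟩
  · rintro v ⟨A, rfl⟩
    obtain ⟨x, hle⟩ := key1 A
    exact ⟨_, ⟨x, rfl⟩, hle⟩
end

section
/- Let m and m_η (η in a directed set Λ) be countably additive X-valued vector measures with L¹(m) ⊆ L¹(m_η) for all η. If for each f ∈ L¹(m) one has lim_η sup_{A ∈ Σ} ‖∫ f h_A dm − ∫ f h_A dm_η‖ = 0, then lim_η ‖f‖_{L¹(m_η)} = ‖f‖_{L¹(m)} for every f ∈ L¹(m). -/
open MeasureTheory Filter

section Aux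

variable {Ω : Type*} [MeasurableSpace Ω]

lemma measurable_hS {A : Set Ω} (hA : MeasurableSet A) : Measurable (hS A) := by
  unfold hS
  exact Measurable.ite hA measurable_const measurable_const

lemma abs_hS (A : Set Ω) (ω : Ω) : |hS A ω| = 1 := by
  unfold hS; split <;> norm_num

lemma integrable_mul_hS {μ : Measure Ω} {f : Ω → ℝ} (hf : Integrable f μ)
    {A : Set Ω} (hA : MeasurableSet A) :
    Integrable (fun ω => f ω * hS A ω) μ := by
  have h := hf.bdd_mul ((measurable_hS hA).aestronglyMeasurable)
    (c := 1) (ae_of_all _ fun ω => by rw [Real.norm_eq_abs, abs_hS])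
  simpa [mul_comm] using h

lemma mul_hS_le_abs {f : Ω → ℝ} (A : Set Ω) (ω : Ω) : f ω * hS A ω ≤ |f ω| := by
  unfold hS; split
  · simpa using le_abs_self (f ω)
  · simpa using neg_le_abs (f ω)

lemma sint_mul_hS_le {s : SignedMeasure Ω} {f : Ω → ℝ}
    (hf : Integrable f s.totalVariation) {A : Set Ω} (hA : MeasurableSet A) :
    sint s (fun ω => f ω * hS A ω) ≤ ∫ ω, |f ω| ∂s.totalVariation := by
  set P := s.toJordanDecomposition.posPart with hPdef
  set N := s.toJordanDecomposition.negPart with hNdef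
  have htv : s.totalVariation = P + N := rfl
  have hfP : Integrable f P := hf.mono_measure (htv ▸ Measure.le_add_right le_rfl)
  have hfN : Integrable f N := hf.mono_measure (htv ▸ Measure.le_add_left le_rfl)
  have h1 : ∫ ω, f ω * hS A ω ∂P ≤ ∫ ω, |f ω| ∂P :=
    integral_mono (integrable_mul_hS hfP hA) hfP.abs (mul_hS_le_abs A)
  have h2 : -∫ ω, f ω * hS A ω ∂N ≤ ∫ ω, |f ω| ∂N := by
    rw [← integral_neg]
    refine integral_mono (integrable_mul_hS hfN hA).neg hfN.abs (fun ω => ?_)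
    have := mul_hS_le_abs (f := fun ω => -f ω) A ω
    simpa [neg_mul] using this
  have hsum : ∫ ω, |f ω| ∂s.totalVariation = ∫ ω, |f ω| ∂P + ∫ ω, |f ω| ∂N := by
    rw [htv, integral_add_measure hfP.abs hfN.abs]
  unfold sint
  rw [← hPdef, ← hNdef, hsum]
  linarith

lemma sint_compl (s : SignedMeasure Ω) (f : Ω → ℝ) (A : Set Ω) :
    sint s (fun ω => f ω * hS Aᶜ ω) = - sint s (fun ω => f ω * hS A ω) := by
  have hfun : (fun ω => f ω * hS Aᶜ ω) = fun ω => -(f ω * hS A ω) := by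
    funext ω; unfold hS
    by_cases h : ω ∈ A <;> simp [h]
  rw [hfun]; unfold sint; rw [integral_neg, integral_neg]; ring

lemma abs_sint_mul_hS_le {s : SignedMeasure Ω} {f : Ω → ℝ}
    (hf : Integrable f s.totalVariation) {A : Set Ω} (hA : MeasurableSet A) :
    |sint s (fun ω => f ω * hS A ω)| ≤ ∫ ω, |f ω| ∂s.totalVariation := by
  rw [abs_le]
  refine ⟨?_, sint_mul_hS_le hf hA⟩
  rw [neg_le, ← sint_compl]
  exact sint_mul_hS_le hf hA.compl

lemma exists_sint_eq {s : SignedMeasure Ω} {f : Ω → ℝ}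
    (hf : Integrable f s.totalVariation) :
    ∃ A : Set Ω, MeasurableSet A ∧
      sint s (fun ω => f ω * hS A ω) = ∫ ω, |f ω| ∂s.totalVariation := by
  set P := s.toJordanDecomposition.posPart with hPdef
  set N := s.toJordanDecomposition.negPart with hNdef
  have htv : s.totalVariation = P + N := rfl
  obtain ⟨t, ht, hPt, hNt⟩ := s.toJordanDecomposition.mutuallySingular
  obtain ⟨g, hgm, hfg⟩ := hf.1
  have hgmeas : Measurable g := hgm.measurable
  set A := (tᶜ ∩ {ω | 0 ≤ g ω}) ∪ (t ∩ {ω | g ω < 0}) with hAdef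
  have hAm : MeasurableSet A :=
    (ht.compl.inter (measurableSet_le measurable_const hgmeas)).union
      (ht.inter (measurableSet_lt hgmeas measurable_const))
  have hP : P ≤ s.totalVariation := htv ▸ Measure.le_add_right le_rfl
  have hN : N ≤ s.totalVariation := htv ▸ Measure.le_add_left le_rfl
  have hfP : Integrable f P := hf.mono_measure hP
  have hfN : Integrable f N := hf.mono_measure hN
  have hfgP : f =ᵐ[P] g := hfg.filter_mono (ae_mono hP)
  have hfgN : f =ᵐ[N] g := hfg.filter_mono (ae_mono hN)
  have haeP : ∀ᵐ ω ∂P, ω ∉ t := measure_eq_zero_iff_ae_notMem.1 hPt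
  have haeN : ∀ᵐ ω ∂N, ω ∈ t := by
    have h := measure_eq_zero_iff_ae_notMem.1 hNt
    filter_upwards [h] with ω hω
    simpa using hω
  have hIP : ∫ ω, f ω * hS A ω ∂P = ∫ ω, |f ω| ∂P := by
    apply integral_congr_ae
    filter_upwards [hfgP, haeP] with ω hfgω hωt
    have hmem : ω ∈ A ↔ 0 ≤ g ω := by
      simp [hAdef, hωt, Set.mem_compl_iff]
    unfold hS
    by_cases h : 0 ≤ g ω
    · rw [if_pos (hmem.2 h), hfgω, mul_one, abs_of_nonneg h]
    · rw [if_neg (fun hh => h (hmem.1 hh)), hfgω, abs_of_neg (lt_of_not_ge h)]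
      ring
  have hIN : ∫ ω, f ω * hS A ω ∂N = -∫ ω, |f ω| ∂N := by
    rw [← integral_neg]
    apply integral_congr_ae
    filter_upwards [hfgN, haeN] with ω hfgω hωt
    have hmem : ω ∈ A ↔ g ω < 0 := by
      simp [hAdef, hωt, Set.mem_compl_iff]
    unfold hS
    by_cases h : g ω < 0
    · rw [if_pos (hmem.2 h), hfgω, mul_one, abs_of_neg h]; ring
    · rw [if_neg (fun hh => h (hmem.1 hh)), hfgω, abs_of_nonneg (le_of_not_gt h)]
      ring
  refine ⟨A, hAm, ?_⟩
  have hsum : ∫ ω, |f ω| ∂s.totalVariation = ∫ ω, |f ω| ∂P + ∫ ω, |f ω| ∂N := by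
    rw [htv, integral_add_measure hfP.abs hfN.abs]
  unfold sint
  rw [← hPdef, ← hNdef, hIP, hIN, hsum]
  ring

lemma exists_norm_bound {X : Type*} [NormedAddCommGroup X] [NormedSpace ℝ X]
    {ι : Type*} (v : ι → X)
    (h : ∀ x : X →L[ℝ] ℝ, ∃ C, ∀ i, |x (v i)| ≤ C) :
    ∃ C, ∀ i, ‖v i‖ ≤ C := by
  obtain ⟨C, hC⟩ := banach_steinhaus
    (g := fun i => NormedSpace.inclusionInDoubleDual ℝ X (v i))
    (fun x => by
      obtain ⟨C, hC⟩ := h x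
      exact ⟨C, fun i => by simpa [NormedSpace.dual_def, Real.norm_eq_abs] using hC i⟩)
  refine ⟨C, fun i => ?_⟩
  have : ‖NormedSpace.inclusionInDoubleDual ℝ X (v i)‖ = ‖v i‖ :=
    (NormedSpace.inclusionInDoubleDualLi ℝ).norm_map (v i)
  rw [← this]; exact hC i

end Aux

/-- if `sup_{A∈Σ} ‖∫ f h_A dm − ∫ f h_A dm_η‖ → 0` along the net, then
`‖f‖_{L¹(m_η)} → ‖f‖_{L¹(m)}` for every `f ∈ L¹(m)`. -/
theorem stmt4 {Ω X : Type*} [MeasurableSpace Ω] [NormedAddCommGroup X] [NormedSpace ℝ X]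
    [CompleteSpace X]
    {Λ : Type*} [SemilatticeSup Λ] [Nonempty Λ]
    (m : VectorMeasure Ω X) (mη : Λ → VectorMeasure Ω X)
    -- `L¹(m) ⊆ L¹(m_η)` for each `η`:
    (hincl : ∀ g : Ω → ℝ, MemL1 m g → ∀ η : Λ, MemL1 (mη η) g)
    (f : Ω → ℝ) (hf : MemL1 m f)
    -- `I A = ∫ f h_A dm`, `J η A = ∫ f h_A dm_η`:
    (I : Set Ω → X) (J : Λ → Set Ω → X)
    (hI : ∀ A : Set Ω, MeasurableSet A → ∀ x : X →L[ℝ] ℝ,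
      x (I A) = sint (scal m x) (fun ω => f ω * hS A ω))
    (hJ : ∀ η : Λ, ∀ A : Set Ω, MeasurableSet A → ∀ x : X →L[ℝ] ℝ,
      x (J η A) = sint (scal (mη η) x) (fun ω => f ω * hS A ω))
    -- hypothesis (i):
    (hlim : Tendsto (fun η : Λ => ⨆ A : {A : Set Ω // MeasurableSet A}, ‖I A.1 - J η A.1‖)
      atTop (nhds 0)) :
    Tendsto (fun η : Λ => l1norm (mη η) f) atTop (nhds (l1norm m f)) := by
  classical
  set S : Λ → ℝ := fun η => ⨆ A : {A : Set Ω // MeasurableSet A}, ‖I A.1 - J η A.1‖ with hSdef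
  have hfη : ∀ η, MemL1 (mη η) f := hincl f hf
  haveI : Nonempty {A : Set Ω // MeasurableSet A} := ⟨⟨∅, MeasurableSet.empty⟩⟩
  haveI : Nonempty {x : X →L[ℝ] ℝ // ‖x‖ ≤ 1} := ⟨⟨0, by simp⟩⟩
  obtain ⟨CI, hCI⟩ : ∃ C, ∀ A : {A : Set Ω // MeasurableSet A}, ‖I A.1‖ ≤ C :=
    exists_norm_bound _ (fun x => ⟨∫ ω, |f ω| ∂(scal m x).totalVariation,
      fun A => by rw [hI A.1 A.2 x]; exact abs_sint_mul_hS_le (hf x) A.2⟩)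
  have hJbd : ∀ η, ∃ C, ∀ A : {A : Set Ω // MeasurableSet A}, ‖J η A.1‖ ≤ C := fun η =>
    exists_norm_bound _ (fun x => ⟨∫ ω, |f ω| ∂(scal (mη η) x).totalVariation,
      fun A => by rw [hJ η A.1 A.2 x]; exact abs_sint_mul_hS_le (hfη η x) A.2⟩)
  have key : ∀ η, |l1norm (mη η) f - l1norm m f| ≤ S η := by
    intro η
    obtain ⟨CJ, hCJ⟩ := hJbd η
    have hbddT : BddAbove
        (Set.range fun A : {A : Set Ω // MeasurableSet A} => ‖I A.1 - J η A.1‖) := by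
      refine ⟨CI + CJ, ?_⟩
      rintro r ⟨A, rfl⟩
      exact (norm_sub_le _ _).trans (add_le_add (hCI A) (hCJ A))
    have hTle : ∀ A : {A : Set Ω // MeasurableSet A}, ‖I A.1 - J η A.1‖ ≤ S η :=
      fun A => le_ciSup hbddT A
    have habs : ∀ (x : X →L[ℝ] ℝ), ‖x‖ ≤ 1 → ∀ (A : Set Ω), MeasurableSet A →
        |x (I A) - x (J η A)| ≤ S η := by
      intro x hx A hA
      rw [← map_sub]
      calc |x (I A - J η A)| ≤ ‖x‖ * ‖I A - J η A‖ := by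
            rw [← Real.norm_eq_abs]; exact x.le_opNorm _
        _ ≤ 1 * ‖I A - J η A‖ :=
            mul_le_mul_of_nonneg_right hx (norm_nonneg _)
        _ = ‖I A - J η A‖ := one_mul _
        _ ≤ S η := hTle ⟨A, hA⟩
    have ha : ∀ x : {x : X →L[ℝ] ℝ // ‖x‖ ≤ 1},
        (∫ ω, |f ω| ∂(scal m x.1).totalVariation)
          ≤ (∫ ω, |f ω| ∂(scal (mη η) x.1).totalVariation) + S η := by
      rintro ⟨x, hx⟩
      obtain ⟨A, hA, hAeq⟩ := exists_sint_eq (hf x)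
      have h1 : x (I A) = ∫ ω, |f ω| ∂(scal m x).totalVariation := (hI A hA x).trans hAeq
      have h2 : x (J η A) ≤ ∫ ω, |f ω| ∂(scal (mη η) x).totalVariation := by
        rw [hJ η A hA x]; exact sint_mul_hS_le (hfη η x) hA
      have h3 := (le_abs_self (x (I A) - x (J η A))).trans (habs x hx A hA)
      simp only []
      linarith
    have hb : ∀ x : {x : X →L[ℝ] ℝ // ‖x‖ ≤ 1},
        (∫ ω, |f ω| ∂(scal (mη η) x.1).totalVariation)
          ≤ (∫ ω, |f ω| ∂(scal m x.1).totalVariation) + S η := by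
      rintro ⟨x, hx⟩
      obtain ⟨A, hA, hAeq⟩ := exists_sint_eq (hfη η x)
      have h1 : x (J η A) = ∫ ω, |f ω| ∂(scal (mη η) x).totalVariation :=
        (hJ η A hA x).trans hAeq
      have h2 : x (I A) ≤ ∫ ω, |f ω| ∂(scal m x).totalVariation := by
        rw [hI A hA x]; exact sint_mul_hS_le (hf x) hA
      have h3 := (neg_le_abs (x (I A) - x (J η A))).trans (habs x hx A hA)
      simp only []
      linarith
    have hbddN : BddAbove (Set.range fun x : {x : X →L[ℝ] ℝ // ‖x‖ ≤ 1} =>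
        ∫ ω, |f ω| ∂(scal m x.1).totalVariation) := by
      refine ⟨CI, ?_⟩
      rintro r ⟨⟨x, hx⟩, rfl⟩
      obtain ⟨A, hA, hAeq⟩ := exists_sint_eq (hf x)
      have h1 : x (I A) = ∫ ω, |f ω| ∂(scal m x).totalVariation := (hI A hA x).trans hAeq
      calc (∫ ω, |f ω| ∂(scal m x).totalVariation) = x (I A) := h1.symm
        _ ≤ |x (I A)| := le_abs_self _
        _ ≤ ‖x‖ * ‖I A‖ := by rw [← Real.norm_eq_abs]; exact x.le_opNorm _
        _ ≤ 1 * CI := mul_le_mul hx (hCI ⟨A, hA⟩) (norm_nonneg _) zero_le_one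
        _ = CI := one_mul _
    have hbddNη : BddAbove (Set.range fun x : {x : X →L[ℝ] ℝ // ‖x‖ ≤ 1} =>
        ∫ ω, |f ω| ∂(scal (mη η) x.1).totalVariation) := by
      refine ⟨CJ, ?_⟩
      rintro r ⟨⟨x, hx⟩, rfl⟩
      obtain ⟨A, hA, hAeq⟩ := exists_sint_eq (hfη η x)
      have h1 : x (J η A) = ∫ ω, |f ω| ∂(scal (mη η) x).totalVariation :=
        (hJ η A hA x).trans hAeq
      calc (∫ ω, |f ω| ∂(scal (mη η) x).totalVariation) = x (J η A) := h1.symm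
        _ ≤ |x (J η A)| := le_abs_self _
        _ ≤ ‖x‖ * ‖J η A‖ := by rw [← Real.norm_eq_abs]; exact x.le_opNorm _
        _ ≤ 1 * CJ := mul_le_mul hx (hCJ ⟨A, hA⟩) (norm_nonneg _) zero_le_one
        _ = CJ := one_mul _
    have h1 : l1norm m f ≤ l1norm (mη η) f + S η := by
      rw [l1norm, l1norm]
      exact ciSup_le fun x => (ha x).trans (add_le_add_left (le_ciSup hbddNη x) _)
    have h2 : l1norm (mη η) f ≤ l1norm m f + S η := by
      rw [l1norm, l1norm]
      exact ciSup_le fun x => (hb x).trans (add_le_add_left (le_ciSup hbddN x) _)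
    rw [abs_sub_le_iff]
    constructor <;> linarith
  have hsq : Tendsto (fun η => |l1norm (mη η) f - l1norm m f|) atTop (nhds 0) :=
    squeeze_zero (fun η => abs_nonneg _) key hlim
  rw [tendsto_iff_dist_tendsto_zero]
  simpa [Real.dist_eq] using hsq
end

section
/- Let m and m_η (η in a directed set Λ) be countably additive X-valued vector measures, all absolutely continuous with respect to a finite measure μ, with L¹(m) ⊆ L¹(m_η) with inclusion of norm at most one for each η. If for each x* ∈ X* the Radon–Nikodým derivatives satisfy lim_η d⟨m_η, x*⟩/dμ = d⟨m, x*⟩/dμ in the weak* topology of (L¹(m))' (i.e., ∫ g · d⟨m_η,x*⟩/dμ dμ → ∫ g · d⟨m,x*⟩/dμ dμ for all g ∈ L¹(m)), then lim_η ‖f‖_{L¹(m_η)} = ‖f‖_{L¹(m)} for every f ∈ L¹(m). -/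
open MeasureTheory Filter

section Aux

open ENNReal

variable {Ω : Type*} [MeasurableSpace Ω] {X : Type*} [NormedAddCommGroup X]
    [NormedSpace ℝ X] {μ : MeasureTheory.Measure Ω} [IsFiniteMeasure μ]
    {ν : VectorMeasure Ω X}

/-- The total variation of an absolutely continuous scalarization is the measure with density
the absolute value of the Radon–Nikodým derivative. -/
lemma tv_eq (x : X →L[ℝ] ℝ) (hx : scal ν x ≪ᵥ μ.toENNRealVectorMeasure) :
    (scal ν x).totalVariation
      = μ.withDensity (fun ω => (‖(scal ν x).rnDeriv μ ω‖₊ : ℝ≥0∞)) := by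
  set s := scal ν x with hs
  have hd : Measurable (s.rnDeriv μ) := s.measurable_rnDeriv μ
  have hdi : Integrable (s.rnDeriv μ) μ := s.integrable_rnDeriv μ
  have hadd : s = 0 + μ.withDensityᵥ (s.rnDeriv μ) := by
    rw [zero_add, SignedMeasure.withDensityᵥ_rnDeriv_eq s μ hx]
  have hJ := SignedMeasure.toJordanDecomposition_eq_of_eq_add_withDensity hd hdi
    (VectorMeasure.MutuallySingular.zero_left) hadd
  rw [SignedMeasure.totalVariation, hJ]
  simp only [SignedMeasure.toJordanDecomposition_zero, JordanDecomposition.zero_posPart,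
    JordanDecomposition.zero_negPart, zero_add]
  rw [← MeasureTheory.withDensity_add_right _ (by exact (hd.neg.ennreal_ofReal))]
  congr 1
  funext ω
  simp only [Pi.add_apply]
  rcases le_total 0 (s.rnDeriv μ ω) with h | h
  · rw [show ENNReal.ofReal (-s.rnDeriv μ ω) = 0 from ENNReal.ofReal_of_nonpos (by linarith),
      add_zero, ← enorm_eq_nnnorm, Real.enorm_eq_ofReal_abs, abs_of_nonneg h]
  · rw [show ENNReal.ofReal (s.rnDeriv μ ω) = 0 from ENNReal.ofReal_of_nonpos h, zero_add,
      ← enorm_eq_nnnorm, Real.enorm_eq_ofReal_abs, abs_of_nonpos h]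

/-- Transfer of integrals from the total variation measure to `μ`. -/
lemma integral_tv (x : X →L[ℝ] ℝ) (hx : scal ν x ≪ᵥ μ.toENNRealVectorMeasure) (g : Ω → ℝ) :
    ∫ ω, g ω ∂(scal ν x).totalVariation
      = ∫ ω, |(scal ν x).rnDeriv μ ω| * g ω ∂μ := by
  rw [tv_eq x hx,
    integral_withDensity_eq_integral_smul
      (f := fun ω => ‖(scal ν x).rnDeriv μ ω‖₊) (((scal ν x).measurable_rnDeriv μ).nnnorm) g]
  simp [NNReal.smul_def, Real.norm_eq_abs]

/-- Transfer of integrability from the total variation measure to `μ`. -/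
lemma integrable_tv_iff (x : X →L[ℝ] ℝ) (hx : scal ν x ≪ᵥ μ.toENNRealVectorMeasure)
    {g : Ω → ℝ} :
    Integrable g (scal ν x).totalVariation
      ↔ Integrable (fun ω => |(scal ν x).rnDeriv μ ω| * g ω) μ := by
  rw [tv_eq x hx,
    integrable_withDensity_iff_integrable_smul
      (f := fun ω => ‖(scal ν x).rnDeriv μ ω‖₊) (((scal ν x).measurable_rnDeriv μ).nnnorm)]
  simp [NNReal.smul_def, Real.norm_eq_abs]

lemma simple_mul_integrable (x : X →L[ℝ] ℝ) (G : SimpleFunc Ω ℝ) :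
    Integrable (fun ω => G ω * (scal ν x).rnDeriv μ ω) μ := by
  obtain ⟨C, hC⟩ := G.exists_forall_norm_le
  refine Integrable.mono' ((((scal ν x).integrable_rnDeriv μ).abs).const_mul C)
    ((G.measurable.mul ((scal ν x).measurable_rnDeriv μ)).aestronglyMeasurable)
    (ae_of_all _ fun ω => ?_)
  rw [Real.norm_eq_abs, abs_mul]
  have := hC ω
  rw [Real.norm_eq_abs] at this
  exact mul_le_mul_of_nonneg_right this (abs_nonneg _) |>.trans_eq rfl

/-- Integration of a simple function against the Radon–Nikodým derivative of `scal ν x` is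
evaluation of `x` at a fixed vector. -/
lemma simple_rep (hν : ∀ x : X →L[ℝ] ℝ, scal ν x ≪ᵥ μ.toENNRealVectorMeasure)
    (G : SimpleFunc Ω ℝ) :
    ∃ v : X, ∀ x : X →L[ℝ] ℝ, ∫ ω, G ω * (scal ν x).rnDeriv μ ω ∂μ = x v := by
  induction G using SimpleFunc.induction with
  | @const c s hs =>
    refine ⟨c • ν s, fun x => ?_⟩
    have key : ∫ ω in s, (scal ν x).rnDeriv μ ω ∂μ = x (ν s) := by
      have h1 : μ.withDensityᵥ ((scal ν x).rnDeriv μ) = scal ν x :=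
        SignedMeasure.withDensityᵥ_rnDeriv_eq _ μ (hν x)
      have h2 := withDensityᵥ_apply ((scal ν x).integrable_rnDeriv μ) hs
      rw [h1] at h2
      rw [← h2]
      rfl
    have hcoe : ∀ ω, (SimpleFunc.piecewise s hs (SimpleFunc.const Ω c)
        (SimpleFunc.const Ω (0:ℝ))) ω * (scal ν x).rnDeriv μ ω
        = Set.indicator s (fun ω => c * (scal ν x).rnDeriv μ ω) ω := by
      intro ω
      by_cases hω : ω ∈ s <;> simp [hω]
    rw [integral_congr_ae (ae_of_all _ hcoe), integral_indicator hs, integral_const_mul, key]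
    simp
  | @add G₁ G₂ _ h₁ h₂ =>
    obtain ⟨v₁, hv₁⟩ := h₁
    obtain ⟨v₂, hv₂⟩ := h₂
    refine ⟨v₁ + v₂, fun x => ?_⟩
    have hcoe : ∀ ω, ((G₁ + G₂ : SimpleFunc Ω ℝ)) ω * (scal ν x).rnDeriv μ ω
        = G₁ ω * (scal ν x).rnDeriv μ ω + G₂ ω * (scal ν x).rnDeriv μ ω := by
      intro ω
      simp [add_mul]
    rw [integral_congr_ae (ae_of_all _ hcoe),
      integral_add (simple_mul_integrable x G₁) (simple_mul_integrable x G₂),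
      hv₁ x, hv₂ x]
    simp

/-- Attainment: any value below `∫ |f| d|scal ν x|` is exceeded by the pairing of a simple
function dominated by `|f|` with the Radon–Nikodým derivative. -/
lemma attain (x : X →L[ℝ] ℝ) (hx : scal ν x ≪ᵥ μ.toENNRealVectorMeasure)
    {f : Ω → ℝ} (hfx : Integrable f (scal ν x).totalVariation) {c : ℝ}
    (hc : c < ∫ ω, |f ω| ∂(scal ν x).totalVariation) :
    ∃ G : SimpleFunc Ω ℝ, (∀ ω, |G ω| ≤ |f ω|) ∧
      c < ∫ ω, G ω * (scal ν x).rnDeriv μ ω ∂μ := by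
  classical
  set d : Ω → ℝ := (scal ν x).rnDeriv μ with hd
  have hdm : Measurable d := (scal ν x).measurable_rnDeriv μ
  set tv := (scal ν x).totalVariation with htv
  -- a measurable version of |f| dominated by |f| pointwise
  set k : Ω → ℝ := hfx.1.mk f with hk
  have hkm : Measurable k := hfx.1.stronglyMeasurable_mk.measurable
  set M : Set Ω := toMeasurable tv {ω | f ω ≠ k ω} with hM
  have hMm : MeasurableSet M := measurableSet_toMeasurable _ _
  have hM0 : tv M = 0 := by
    rw [hM, measure_toMeasurable]
    exact hfx.1.ae_eq_mk
  set F : Ω → ℝ := fun ω => if ω ∈ M then 0 else |k ω| with hF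
  have hFm : Measurable F := Measurable.ite hMm measurable_const hkm.abs
  have hFle : ∀ ω, F ω ≤ |f ω| := by
    intro ω
    by_cases hω : ω ∈ M
    · simp [hF, hω, abs_nonneg]
    · have : f ω = k ω := by
        by_contra hne
        exact hω (subset_toMeasurable _ _ hne)
      simp [hF, hω, this]
  have hF0 : ∀ ω, 0 ≤ F ω := by
    intro ω; by_cases hω : ω ∈ M <;> simp [hF, hω, abs_nonneg]
  have hFae : F =ᵐ[tv] fun ω => |f ω| := by
    have hMae : ∀ᵐ ω ∂tv, ω ∉ M := by
      rw [ae_iff]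
      simpa using hM0
    filter_upwards [hMae] with ω hω
    have : f ω = k ω := by
      by_contra hne
      exact hω (subset_toMeasurable _ _ hne)
    simp [hF, hω, this]
  -- rewrite the target integral over μ
  have hFi : Integrable F tv := (hfx.abs.congr hFae.symm)
  have hFi' : Integrable (fun ω => |d ω| * F ω) μ := (integrable_tv_iff x hx).1 hFi
  have hc' : c < ∫ ω, |d ω| * F ω ∂μ := by
    have h1 : (∫ ω, |f ω| ∂tv) = ∫ ω, F ω ∂tv := integral_congr_ae hFae.symm
    have h2 := integral_tv x hx F
    rw [h1, h2] at hc
    exact hc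
  -- simple approximations of F from below
  set Fe : Ω → ℝ≥0∞ := fun ω => ENNReal.ofReal (F ω) with hFe
  have hFem : Measurable Fe := hFm.ennreal_ofReal
  set Gn : ℕ → SimpleFunc Ω ℝ := fun n => (SimpleFunc.eapprox Fe n).map ENNReal.toReal with hGn
  have hGnle : ∀ n ω, Gn n ω ≤ F ω := by
    intro n ω
    have h1 : SimpleFunc.eapprox Fe n ω ≤ Fe ω :=
      (le_iSup (fun n => SimpleFunc.eapprox Fe n ω) n).trans_eq
        (SimpleFunc.iSup_eapprox_apply hFem ω)
    simpa [hGn] using ENNReal.toReal_le_of_le_ofReal (hF0 ω) h1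
  have hGn0 : ∀ n ω, 0 ≤ Gn n ω := fun n ω => ENNReal.toReal_nonneg
  have hGmono : ∀ ω, Monotone fun n => Gn n ω := by
    intro ω n₁ n₂ h
    exact ENNReal.toReal_mono (SimpleFunc.eapprox_lt_top Fe n₂ ω).ne
      (SimpleFunc.monotone_eapprox Fe h ω)
  have hGtend : ∀ ω, Tendsto (fun n => Gn n ω) atTop (nhds (F ω)) := by
    intro ω
    have h1 : Tendsto (fun n => SimpleFunc.eapprox Fe n ω) atTop (nhds (Fe ω)) := by
      rw [← SimpleFunc.iSup_eapprox_apply hFem ω]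
      exact tendsto_atTop_iSup (fun n₁ n₂ h => SimpleFunc.monotone_eapprox Fe h ω)
    have h2 : Tendsto (fun n => (SimpleFunc.eapprox Fe n ω).toReal) atTop
        (nhds (Fe ω).toReal) :=
      (ENNReal.tendsto_toReal (by simp [hFe])).comp h1
    simpa [hGn, hFe, ENNReal.toReal_ofReal (hF0 ω)] using h2
  -- monotone convergence
  have hMCT : Tendsto (fun n => ∫ ω, |d ω| * Gn n ω ∂μ) atTop
      (nhds (∫ ω, |d ω| * F ω ∂μ)) := by
    refine integral_tendsto_of_tendsto_of_monotone (fun n => ?_) hFi' ?_ ?_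
    · refine Integrable.mono' hFi'
        ((hdm.abs.mul (Gn n).measurable).aestronglyMeasurable) (ae_of_all _ fun ω => ?_)
      rw [Real.norm_eq_abs, abs_mul, abs_abs, abs_of_nonneg (hGn0 n ω)]
      exact mul_le_mul_of_nonneg_left (hGnle n ω) (abs_nonneg _)
    · exact ae_of_all _ fun ω n₁ n₂ h =>
        mul_le_mul_of_nonneg_left (hGmono ω h) (abs_nonneg _)
    · exact ae_of_all _ fun ω => (hGtend ω).const_mul _
  obtain ⟨n, hn⟩ := ((hMCT.eventually (eventually_gt_nhds hc')).and
    (eventually_ge_atTop 0)).exists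
  -- multiply by the sign of `d`
  set B : Set Ω := {ω | 0 ≤ d ω} with hB
  have hBm : MeasurableSet B := measurableSet_le measurable_const hdm
  set sgn : SimpleFunc Ω ℝ :=
    SimpleFunc.piecewise B hBm (SimpleFunc.const Ω (1:ℝ)) (SimpleFunc.const Ω (-1:ℝ)) with hsgn
  refine ⟨Gn n * sgn, fun ω => ?_, ?_⟩
  · have h1 : |(Gn n * sgn) ω| = Gn n ω := by
      by_cases hω : ω ∈ B <;>
        simp [hsgn, hω, abs_mul, abs_of_nonneg (hGn0 n ω)]
    rw [h1]
    exact (hGnle n ω).trans (hFle ω)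
  · have h1 : ∀ ω, (Gn n * sgn) ω * d ω = |d ω| * Gn n ω := by
      intro ω
      rcases le_or_gt 0 (d ω) with hω | hω
      · have : ω ∈ B := hω
        simp only [SimpleFunc.coe_mul, Pi.mul_apply]
        rw [abs_of_nonneg hω]
        simp [hsgn, this]
        ring
      · have : ω ∉ B := by simpa [hB] using hω
        simp only [SimpleFunc.coe_mul, Pi.mul_apply]
        rw [abs_of_neg hω]
        simp [hsgn, this]
        ring
    rw [integral_congr_ae (ae_of_all _ h1)]
    exact hn.1

/-- Uniform boundedness: the family of total-variation integrals over the unit ball of the dual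
is bounded above. This is the finiteness of the `L¹(ν)`-norm, proved by Banach–Steinhaus. -/
lemma l1_bddAbove (hν : ∀ x : X →L[ℝ] ℝ, scal ν x ≪ᵥ μ.toENNRealVectorMeasure)
    {f : Ω → ℝ} (hf : MemL1 ν f) :
    BddAbove (Set.range fun x : {x : X →L[ℝ] ℝ // ‖x‖ ≤ 1} =>
      ∫ ω, |f ω| ∂(scal ν x.1).totalVariation) := by
  classical
  set I := {G : SimpleFunc Ω ℝ // ∀ ω, |G ω| ≤ |f ω|} with hI
  have hrep : ∀ G : I, ∃ v : X, ∀ x : X →L[ℝ] ℝ,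
      ∫ ω, G.1 ω * (scal ν x).rnDeriv μ ω ∂μ = x v := fun G => simple_rep hν G.1
  choose v hv using hrep
  set g : I → StrongDual ℝ X →L[ℝ] ℝ :=
    fun G => NormedSpace.inclusionInDoubleDual ℝ X (v G) with hg
  have hbound : ∀ G : I, ∀ x : X →L[ℝ] ℝ,
      |x (v G)| ≤ ∫ ω, |f ω| ∂(scal ν x).totalVariation := by
    intro G x
    rw [← hv G x]
    have h1 : ‖∫ ω, G.1 ω * (scal ν x).rnDeriv μ ω ∂μ‖
        ≤ ∫ ω, ‖G.1 ω * (scal ν x).rnDeriv μ ω‖ ∂μ := norm_integral_le_integral_norm _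
    rw [Real.norm_eq_abs] at h1
    refine h1.trans ?_
    have h2 : Integrable (fun ω => |(scal ν x).rnDeriv μ ω| * |f ω|) μ :=
      (integrable_tv_iff x (hν x)).1 (hf x).abs
    have h3 : ∫ ω, ‖G.1 ω * (scal ν x).rnDeriv μ ω‖ ∂μ
        ≤ ∫ ω, |(scal ν x).rnDeriv μ ω| * |f ω| ∂μ := by
      refine integral_mono ((simple_mul_integrable x G.1).norm) h2 fun ω => ?_
      rw [Real.norm_eq_abs, abs_mul, mul_comm]
      exact mul_le_mul_of_nonneg_left (G.2 ω) (abs_nonneg _)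
    refine h3.trans ?_
    rw [integral_tv x (hν x) (fun ω => |f ω|)]
  obtain ⟨C', hC'⟩ := banach_steinhaus (g := g) (fun x =>
    ⟨∫ ω, |f ω| ∂(scal ν x).totalVariation, fun G => by
      simpa [hg, NormedSpace.dual_def, Real.norm_eq_abs] using hbound G x⟩)
  refine ⟨C', ?_⟩
  rintro _ ⟨⟨x, hx1⟩, rfl⟩
  by_contra hlt
  push_neg at hlt
  obtain ⟨G, hGle, hGgt⟩ := attain x (hν x) (hf x) hlt
  have h1 : x (v ⟨G, hGle⟩) ≤ C' := by
    have h2 : |x (v ⟨G, hGle⟩)| = ‖g ⟨G, hGle⟩ x‖ := by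
      simp [hg, NormedSpace.dual_def, Real.norm_eq_abs]
    calc x (v ⟨G, hGle⟩) ≤ |x (v ⟨G, hGle⟩)| := le_abs_self _
      _ = ‖g ⟨G, hGle⟩ x‖ := h2
      _ ≤ ‖g ⟨G, hGle⟩‖ * ‖x‖ := (g ⟨G, hGle⟩).le_opNorm x
      _ ≤ C' * 1 := mul_le_mul (hC' ⟨G, hGle⟩) hx1 (norm_nonneg _)
          ((norm_nonneg _).trans (hC' ⟨G, hGle⟩))
      _ = C' := mul_one C'
  rw [← hv ⟨G, hGle⟩ x] at h1
  exact absurd (hGgt.trans_le h1) (lt_irrefl C')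

end Aux

/-- if the inclusions `L¹(m) ⊆ L¹(m_η)` have norm at most one and the
Radon–Nikodým derivatives `d⟨m_η,x*⟩/dμ` converge weakly* to `d⟨m,x*⟩/dμ` (against every
`g ∈ L¹(m)`), then `‖f‖_{L¹(m_η)} → ‖f‖_{L¹(m)}` for every `f ∈ L¹(m)`. -/
theorem stmt5 {Ω X : Type*} [MeasurableSpace Ω] [NormedAddCommGroup X] [NormedSpace ℝ X]
    [CompleteSpace X]
    {Λ : Type*} [SemilatticeSup Λ] [Nonempty Λ]
    (μ : Measure Ω) [IsFiniteMeasure μ]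
    (m : VectorMeasure Ω X) (mη : Λ → VectorMeasure Ω X)
    -- absolute continuity with respect to `μ`:
    (hac : ∀ x : X →L[ℝ] ℝ, scal m x ≪ᵥ μ.toENNRealVectorMeasure)
    (hacη : ∀ η : Λ, ∀ x : X →L[ℝ] ℝ, scal (mη η) x ≪ᵥ μ.toENNRealVectorMeasure)
    -- `L¹(m) ⊆ L¹(m_η)` with inclusion of norm at most one:
    (hincl : ∀ g : Ω → ℝ, MemL1 m g → ∀ η : Λ,
      MemL1 (mη η) g ∧ l1norm (mη η) g ≤ l1norm m g)
    -- weak* convergence of the Radon–Nikodým derivatives: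
    (hweak : ∀ x : X →L[ℝ] ℝ, ∀ g : Ω → ℝ, MemL1 m g →
      Tendsto (fun η : Λ => ∫ ω, g ω * (scal (mη η) x).rnDeriv μ ω ∂μ) atTop
        (nhds (∫ ω, g ω * (scal m x).rnDeriv μ ω ∂μ))) :
    ∀ f : Ω → ℝ, MemL1 m f →
      Tendsto (fun η : Λ => l1norm (mη η) f) atTop (nhds (l1norm m f)) := by
  intro f hf
  haveI : Nonempty {x : X →L[ℝ] ℝ // ‖x‖ ≤ 1} := ⟨⟨0, by simp⟩⟩
  have hle : ∀ η, l1norm (mη η) f ≤ l1norm m f := fun η => (hincl f hf η).2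
  have hBη : ∀ η, BddAbove (Set.range fun x : {x : X →L[ℝ] ℝ // ‖x‖ ≤ 1} =>
      ∫ ω, |f ω| ∂(scal (mη η) x.1).totalVariation) :=
    fun η => l1_bddAbove (hacη η) (hincl f hf η).1
  rw [tendsto_order]
  constructor
  · intro a ha
    have ha' : a < ⨆ x : {x : X →L[ℝ] ℝ // ‖x‖ ≤ 1},
        ∫ ω, |f ω| ∂(scal m x.1).totalVariation := ha
    obtain ⟨⟨x, hx1⟩, hax⟩ := exists_lt_of_lt_ciSup ha'
    obtain ⟨G, hGle, hGgt⟩ := attain x (hac x) (hf x) hax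
    have hGL1 : MemL1 m G := by
      intro x'
      refine Integrable.mono' (hf x').abs (G.measurable.aestronglyMeasurable)
        (ae_of_all _ fun ω => ?_)
      rw [Real.norm_eq_abs]
      exact hGle ω
    have hev : ∀ᶠ η in atTop, a < ∫ ω, G ω * (scal (mη η) x).rnDeriv μ ω ∂μ :=
      (hweak x G hGL1).eventually (eventually_gt_nhds hGgt)
    filter_upwards [hev] with η hη
    have h2 : Integrable (fun ω => |(scal (mη η) x).rnDeriv μ ω| * |f ω|) μ :=
      (integrable_tv_iff x (hacη η x)).1 ((hincl f hf η).1 x).abs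
    calc a < ∫ ω, G ω * (scal (mη η) x).rnDeriv μ ω ∂μ := hη
      _ ≤ ∫ ω, |(scal (mη η) x).rnDeriv μ ω| * |f ω| ∂μ := by
          refine integral_mono (simple_mul_integrable x G) h2 fun ω => ?_
          calc G ω * (scal (mη η) x).rnDeriv μ ω
              ≤ |G ω * (scal (mη η) x).rnDeriv μ ω| := le_abs_self _
            _ = |G ω| * |(scal (mη η) x).rnDeriv μ ω| := abs_mul _ _
            _ ≤ |f ω| * |(scal (mη η) x).rnDeriv μ ω| :=
                mul_le_mul_of_nonneg_right (hGle ω) (abs_nonneg _)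
            _ = |(scal (mη η) x).rnDeriv μ ω| * |f ω| := mul_comm _ _
      _ = ∫ ω, |f ω| ∂(scal (mη η) x).totalVariation :=
          (integral_tv x (hacη η x) (fun ω => |f ω|)).symm
      _ ≤ l1norm (mη η) f := le_ciSup (hBη η) ⟨x, hx1⟩
  · intro a ha
    exact Eventually.of_forall fun η => lt_of_le_of_lt (hle η) ha
end

section
/- Let X be a Banach space with a normalized monotone Schauder basis, let P_n denote the basis projections (so ‖P_n‖ ≤ 1 and P_n x → x for all x), let m : Σ → X be a countably additive vector measure and m_n := P_n ∘ m. Then for every f ∈ L¹(m), f ∈ L¹(m_n) for all n and lim_n ‖f‖_{L¹(m_n)} = ‖f‖_{L¹(m)}. -/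
open MeasureTheory Filter
open scoped ENNReal

/-- Composition of a vector measure with a continuous linear map. -/
noncomputable def compVM {Ω X Y : Type*} [MeasurableSpace Ω] [NormedAddCommGroup X]
    [NormedSpace ℝ X] [NormedAddCommGroup Y] [NormedSpace ℝ Y]
    (T : X →L[ℝ] Y) (m : VectorMeasure Ω X) : VectorMeasure Ω Y :=
  m.mapRange T.toLinearMap.toAddMonoidHom T.continuous

section Aux

variable {Ω : Type*} [MeasurableSpace Ω] {X : Type*} [NormedAddCommGroup X] [NormedSpace ℝ X]

lemma sm_apply_jordan (s : SignedMeasure Ω) {A : Set Ω} (hA : MeasurableSet A) :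
    s A = (s.toJordanDecomposition.posPart A).toReal -
      (s.toJordanDecomposition.negPart A).toReal := by
  conv_lhs => rw [← s.toSignedMeasure_toJordanDecomposition]
  exact Measure.toSignedMeasure_sub_apply hA

instance tv_finite (s : SignedMeasure Ω) : IsFiniteMeasure s.totalVariation := by
  unfold SignedMeasure.totalVariation
  infer_instance

lemma integrable_tv_iff_s6 {s : SignedMeasure Ω} {g : Ω → ℝ} :
    Integrable g s.totalVariation ↔
      Integrable g s.toJordanDecomposition.posPart ∧
        Integrable g s.toJordanDecomposition.negPart := by
  unfold SignedMeasure.totalVariation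
  exact integrable_add_measure

lemma integral_tv_s6 {s : SignedMeasure Ω} {g : Ω → ℝ} (hg : Integrable g s.totalVariation) :
    ∫ ω, g ω ∂s.totalVariation = ∫ ω, g ω ∂s.toJordanDecomposition.posPart
      + ∫ ω, g ω ∂s.toJordanDecomposition.negPart := by
  obtain ⟨h1, h2⟩ := integrable_tv_iff_s6.mp hg
  unfold SignedMeasure.totalVariation
  exact integral_add_measure h1 h2

lemma abs_sint_le (s : SignedMeasure Ω) (g : Ω → ℝ) (hg : Integrable g s.totalVariation) :
    |sint s g| ≤ ∫ ω, |g ω| ∂s.totalVariation := by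
  obtain ⟨h1, h2⟩ := integrable_tv_iff_s6.mp hg
  have e : ∫ ω, |g ω| ∂s.totalVariation
      = ∫ ω, |g ω| ∂s.toJordanDecomposition.posPart
        + ∫ ω, |g ω| ∂s.toJordanDecomposition.negPart := integral_tv_s6 hg.abs
  rw [e, sint]
  have b1 : |∫ ω, g ω ∂s.toJordanDecomposition.posPart|
      ≤ ∫ ω, |g ω| ∂s.toJordanDecomposition.posPart := by
    simpa [Real.norm_eq_abs] using
      norm_integral_le_integral_norm (μ := s.toJordanDecomposition.posPart) g
  have b2 : |∫ ω, g ω ∂s.toJordanDecomposition.negPart|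
      ≤ ∫ ω, |g ω| ∂s.toJordanDecomposition.negPart := by
    simpa [Real.norm_eq_abs] using
      norm_integral_le_integral_norm (μ := s.toJordanDecomposition.negPart) g
  calc |∫ ω, g ω ∂s.toJordanDecomposition.posPart - ∫ ω, g ω ∂s.toJordanDecomposition.negPart|
      ≤ |∫ ω, g ω ∂s.toJordanDecomposition.posPart|
        + |∫ ω, g ω ∂s.toJordanDecomposition.negPart| := abs_sub _ _
    _ ≤ _ := add_le_add b1 b2

lemma sint_add_measure (s t : SignedMeasure Ω) (g : Ω → ℝ)
    (hs : Integrable g s.totalVariation) (ht : Integrable g t.totalVariation)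
    (hst : Integrable g (s + t).totalVariation) :
    sint (s + t) g = sint s g + sint t g := by
  obtain ⟨hs1, hs2⟩ := integrable_tv_iff_s6.mp hs
  obtain ⟨ht1, ht2⟩ := integrable_tv_iff_s6.mp ht
  obtain ⟨hst1, hst2⟩ := integrable_tv_iff_s6.mp hst
  have key : (s+t).toJordanDecomposition.posPart + (s.toJordanDecomposition.negPart
        + t.toJordanDecomposition.negPart)
      = (s+t).toJordanDecomposition.negPart + (s.toJordanDecomposition.posPart
        + t.toJordanDecomposition.posPart) := by
    ext A hA
    have h1 := sm_apply_jordan (s+t) hA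
    have h2 := sm_apply_jordan s hA
    have h3 := sm_apply_jordan t hA
    have h4 : (s+t) A = s A + t A := VectorMeasure.add_apply s t A
    simp only [Measure.coe_add, Pi.add_apply]
    rw [← ENNReal.toReal_eq_toReal_iff' (by finiteness) (by finiteness),
      ENNReal.toReal_add (by finiteness) (by finiteness),
      ENNReal.toReal_add (by finiteness) (by finiteness),
      ENNReal.toReal_add (by finiteness) (by finiteness),
      ENNReal.toReal_add (by finiteness) (by finiteness)]
    linarith
  have e1 : ∫ ω, g ω ∂((s+t).toJordanDecomposition.posPart + (s.toJordanDecomposition.negPart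
        + t.toJordanDecomposition.negPart))
      = ∫ ω, g ω ∂(s+t).toJordanDecomposition.posPart
        + (∫ ω, g ω ∂s.toJordanDecomposition.negPart
          + ∫ ω, g ω ∂t.toJordanDecomposition.negPart) := by
    rw [integral_add_measure hst1 (hs2.add_measure ht2), integral_add_measure hs2 ht2]
  have e2 : ∫ ω, g ω ∂((s+t).toJordanDecomposition.negPart + (s.toJordanDecomposition.posPart
        + t.toJordanDecomposition.posPart))
      = ∫ ω, g ω ∂(s+t).toJordanDecomposition.negPart
        + (∫ ω, g ω ∂s.toJordanDecomposition.posPart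
          + ∫ ω, g ω ∂t.toJordanDecomposition.posPart) := by
    rw [integral_add_measure hst2 (hs1.add_measure ht1), integral_add_measure hs1 ht1]
  rw [key, e2] at e1
  simp only [sint]
  linarith

lemma integrable_simple (g : SimpleFunc Ω ℝ) (μ : Measure Ω) [IsFiniteMeasure μ] :
    Integrable g μ := by
  obtain ⟨C, hC⟩ : ∃ C, ∀ ω, |g ω| ≤ C := by
    obtain ⟨C, hC⟩ := (g.map abs).exists_forall_le
    exact ⟨C, fun ω => by simpa using hC ω⟩
  exact (integrable_const C).mono' g.stronglyMeasurable.aestronglyMeasurable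
    (Filter.Eventually.of_forall fun ω => by simpa [Real.norm_eq_abs] using hC ω)

lemma sint_simple (s : SignedMeasure Ω) (g : SimpleFunc Ω ℝ) :
    sint s g = ∑ c ∈ g.range, c * s (g ⁻¹' {c}) := by
  rw [sint, SimpleFunc.integral_eq_sum g (integrable_simple g _),
    SimpleFunc.integral_eq_sum g (integrable_simple g _), ← Finset.sum_sub_distrib]
  refine Finset.sum_congr rfl fun c _ => ?_
  rw [sm_apply_jordan s (g.measurableSet_preimage _)]
  simp [smul_eq_mul]
  simp only [Measure.real]
  ring

lemma scal_apply' (m : VectorMeasure Ω X) (y : X →L[ℝ] ℝ) (A : Set Ω) :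
    scal m y A = y (m A) := VectorMeasure.mapRange_apply _ y.continuous

lemma compVM_apply {Y : Type*} [NormedAddCommGroup Y] [NormedSpace ℝ Y]
    (T : X →L[ℝ] Y) (m : VectorMeasure Ω X) (A : Set Ω) :
    compVM T m A = T (m A) := VectorMeasure.mapRange_apply _ T.continuous

lemma scal_compVM {Y : Type*} [NormedAddCommGroup Y] [NormedSpace ℝ Y]
    (T : X →L[ℝ] Y) (m : VectorMeasure Ω X) (x : Y →L[ℝ] ℝ) :
    scal (compVM T m) x = scal m (x.comp T) := by
  ext A _
  rw [scal_apply', scal_apply', compVM_apply]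
  rfl

lemma scal_add_right (m : VectorMeasure Ω X) (y z : X →L[ℝ] ℝ) :
    scal m (y + z) = scal m y + scal m z := by
  ext A _
  rw [VectorMeasure.add_apply, scal_apply', scal_apply', scal_apply']
  rfl

noncomputable def vInt (m : VectorMeasure Ω X) (g : SimpleFunc Ω ℝ) : X :=
  ∑ c ∈ g.range, c • m (g ⁻¹' {c})

lemma sint_scal_simple (m : VectorMeasure Ω X) (y : X →L[ℝ] ℝ) (g : SimpleFunc Ω ℝ) :
    sint (scal m y) g = y (vInt m g) := by
  rw [sint_simple, vInt, map_sum]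
  refine Finset.sum_congr rfl fun c _ => ?_
  rw [scal_apply', _root_.map_smul, smul_eq_mul]

lemma integrable_of_bdd {μ : Measure Ω} [IsFiniteMeasure μ] {g : Ω → ℝ}
    (hg : AEStronglyMeasurable g μ) {k : ℝ} (hb : ∀ ω, |g ω| ≤ k) : Integrable g μ :=
  (integrable_const k).mono' hg (Filter.Eventually.of_forall fun ω => by
    simpa [Real.norm_eq_abs] using hb ω)

lemma integral_abs_le_of_bdd {μ : Measure Ω} [IsFiniteMeasure μ] {g : Ω → ℝ}
    (hg : AEStronglyMeasurable g μ) {k : ℝ} (hb : ∀ ω, |g ω| ≤ k) :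
    ∫ ω, |g ω| ∂μ ≤ k * (μ Set.univ).toReal := by
  have h1 : Integrable (fun ω => |g ω|) μ := (integrable_of_bdd hg hb).abs
  calc ∫ ω, |g ω| ∂μ ≤ ∫ _ω, k ∂μ := integral_mono h1 (integrable_const k) fun ω => hb ω
    _ = k * (μ Set.univ).toReal := by rw [integral_const, smul_eq_mul, mul_comm]; rfl

lemma tv_univ_toReal (s : SignedMeasure Ω) :
    ∃ u : Set Ω, MeasurableSet u ∧
      (s.totalVariation Set.univ).toReal = s uᶜ - s u := by
  obtain ⟨u, hu, h1, h2⟩ := s.toJordanDecomposition.mutuallySingular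
  refine ⟨u, hu, ?_⟩
  have hpos : s.toJordanDecomposition.posPart Set.univ = s.toJordanDecomposition.posPart uᶜ := by
    refine le_antisymm ?_ (measure_mono (Set.subset_univ _))
    calc s.toJordanDecomposition.posPart Set.univ ≤ _ + _ :=
      measure_union_le (μ := s.toJordanDecomposition.posPart) uᶜ u |>.trans_eq' (by
        rw [Set.compl_union_self])
      _ = s.toJordanDecomposition.posPart uᶜ := by rw [h1, add_zero]
  have hneg : s.toJordanDecomposition.negPart Set.univ = s.toJordanDecomposition.negPart u := by
    refine le_antisymm ?_ (measure_mono (Set.subset_univ _))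
    calc s.toJordanDecomposition.negPart Set.univ ≤ _ + _ :=
      measure_union_le (μ := s.toJordanDecomposition.negPart) u uᶜ |>.trans_eq' (by
        rw [Set.union_compl_self])
      _ = s.toJordanDecomposition.negPart u := by rw [h2, add_zero]
  have e1 := sm_apply_jordan s hu.compl
  have e2 := sm_apply_jordan s hu
  rw [SignedMeasure.totalVariation, Measure.add_apply,
    ENNReal.toReal_add (by finiteness) (by finiteness), hpos, hneg]
  rw [h2] at e1
  rw [h1] at e2
  simp at e1 e2
  linarith

lemma abs_apply_le_tv (s : SignedMeasure Ω) (A : Set Ω) :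
    |s A| ≤ (s.totalVariation Set.univ).toReal := by
  by_cases hA : MeasurableSet A
  · rw [sm_apply_jordan s hA, SignedMeasure.totalVariation, Measure.add_apply,
      ENNReal.toReal_add (by finiteness) (by finiteness)]
    have p1 : (s.toJordanDecomposition.posPart A).toReal
        ≤ (s.toJordanDecomposition.posPart Set.univ).toReal :=
      ENNReal.toReal_mono (by finiteness) (measure_mono (Set.subset_univ _))
    have p2 : (s.toJordanDecomposition.negPart A).toReal
        ≤ (s.toJordanDecomposition.negPart Set.univ).toReal :=
      ENNReal.toReal_mono (by finiteness) (measure_mono (Set.subset_univ _))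
    have := ENNReal.toReal_nonneg (a := s.toJordanDecomposition.posPart A)
    have := ENNReal.toReal_nonneg (a := s.toJordanDecomposition.negPart A)
    rw [abs_sub_le_iff]
    constructor <;> linarith
  · rw [VectorMeasure.not_measurable s hA]
    simp

lemma tv_zero_of_subsets (s : SignedMeasure Ω) {A : Set Ω} (hA : MeasurableSet A)
    (h : ∀ B : Set Ω, B ⊆ A → MeasurableSet B → s B = 0) : s.totalVariation A = 0 := by
  obtain ⟨u, hu, h1, h2⟩ := s.toJordanDecomposition.mutuallySingular
  have hpos : s.toJordanDecomposition.posPart A = 0 := by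
    have hsub : s.toJordanDecomposition.posPart A ≤
        s.toJordanDecomposition.posPart (A ∩ uᶜ) + s.toJordanDecomposition.posPart (A ∩ u) := by
      have : A = (A ∩ uᶜ) ∪ (A ∩ u) := by rw [Set.union_comm, Set.inter_union_compl]
      calc s.toJordanDecomposition.posPart A = _ := by rw [← this]
        _ ≤ _ := measure_union_le _ _
    have hz1 : s.toJordanDecomposition.posPart (A ∩ u) = 0 :=
      le_antisymm (h1 ▸ measure_mono Set.inter_subset_right) (zero_le)
    have hz2 : s.toJordanDecomposition.posPart (A ∩ uᶜ) = 0 := by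
      have hmeas : MeasurableSet (A ∩ uᶜ) := hA.inter hu.compl
      have hs0 : s (A ∩ uᶜ) = 0 := h _ Set.inter_subset_left hmeas
      have hneg0 : s.toJordanDecomposition.negPart (A ∩ uᶜ) = 0 :=
        le_antisymm (h2 ▸ measure_mono Set.inter_subset_right) (zero_le)
      have := sm_apply_jordan s hmeas
      rw [hs0, hneg0] at this
      simp at this
      rw [← ENNReal.toReal_eq_toReal_iff' (by finiteness) (by simp)]
      simpa using this.symm
    simpa [hz1, hz2] using hsub
  have hneg : s.toJordanDecomposition.negPart A = 0 := by
    have hsub : s.toJordanDecomposition.negPart A ≤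
        s.toJordanDecomposition.negPart (A ∩ u) + s.toJordanDecomposition.negPart (A ∩ uᶜ) := by
      have : A = (A ∩ u) ∪ (A ∩ uᶜ) := by rw [Set.inter_union_compl]
      calc s.toJordanDecomposition.negPart A = _ := by rw [← this]
        _ ≤ _ := measure_union_le _ _
    have hz1 : s.toJordanDecomposition.negPart (A ∩ uᶜ) = 0 :=
      le_antisymm (h2 ▸ measure_mono Set.inter_subset_right) (zero_le)
    have hz2 : s.toJordanDecomposition.negPart (A ∩ u) = 0 := by
      have hmeas : MeasurableSet (A ∩ u) := hA.inter hu
      have hs0 : s (A ∩ u) = 0 := h _ Set.inter_subset_left hmeas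
      have hpos0 : s.toJordanDecomposition.posPart (A ∩ u) = 0 :=
        le_antisymm (h1 ▸ measure_mono Set.inter_subset_right) (zero_le)
      have := sm_apply_jordan s hmeas
      rw [hs0, hpos0] at this
      simp at this
      rw [← ENNReal.toReal_eq_toReal_iff' (by finiteness) (by simp)]
      simpa using this
    simpa [hz1, hz2] using hsub
  rw [SignedMeasure.totalVariation, Measure.add_apply, hpos, hneg, add_zero]

lemma exists_simple_approx (ρ : Measure Ω) [IsFiniteMeasure ρ] {F : Ω → ℝ} (hF : Measurable F)
    (hint : Integrable F ρ) {ε : ℝ} (hε : 0 < ε) :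
    ∃ h : SimpleFunc Ω ℝ, (∀ ω, 0 ≤ h ω) ∧ (∀ ω, h ω ≤ |F ω|) ∧
      ∫ ω, |F ω| ∂ρ - ε < ∫ ω, h ω ∂ρ := by
  set G : Ω → ℝ≥0∞ := fun ω => ENNReal.ofReal |F ω| with hGdef
  have hG : Measurable G := hF.abs.ennreal_ofReal
  have hofReal : ENNReal.ofReal (∫ ω, |F ω| ∂ρ) = ∫⁻ ω, G ω ∂ρ :=
    ofReal_integral_eq_lintegral_ofReal hint.abs
      (Filter.Eventually.of_forall fun ω => abs_nonneg _)
  have hb_fin : ∫⁻ ω, G ω ∂ρ ≠ ⊤ := by rw [← hofReal]; exact ENNReal.ofReal_ne_top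
  have hble : ∀ k ω, SimpleFunc.eapprox G k ω ≤ G ω := fun k ω => by
    rw [← SimpleFunc.iSup_eapprox_apply hG ω]
    exact le_iSup (fun n => SimpleFunc.eapprox G n ω) k
  have hsup : (⨆ k, ∫⁻ ω, SimpleFunc.eapprox G k ω ∂ρ) = ∫⁻ ω, G ω ∂ρ := by
    rw [← lintegral_iSup (fun n => (SimpleFunc.eapprox G n).measurable)
      (fun i j h ω => SimpleFunc.monotone_eapprox G h ω)]
    exact lintegral_congr fun ω => SimpleFunc.iSup_eapprox_apply hG ω
  have hmono : Monotone (fun k => ∫⁻ ω, SimpleFunc.eapprox G k ω ∂ρ) :=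
    fun i j h => lintegral_mono fun ω => SimpleFunc.monotone_eapprox G h ω
  have htend : Tendsto (fun k => (∫⁻ ω, SimpleFunc.eapprox G k ω ∂ρ).toReal) atTop
      (nhds (∫ ω, |F ω| ∂ρ)) := by
    have h1 : Tendsto (fun k => ∫⁻ ω, SimpleFunc.eapprox G k ω ∂ρ) atTop
        (nhds (∫⁻ ω, G ω ∂ρ)) := hsup ▸ tendsto_atTop_iSup hmono
    have h2 := (ENNReal.tendsto_toReal hb_fin).comp h1
    have h3 : (∫⁻ ω, G ω ∂ρ).toReal = ∫ ω, |F ω| ∂ρ := by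
      rw [← hofReal, ENNReal.toReal_ofReal (integral_nonneg fun ω => abs_nonneg _)]
    rwa [h3] at h2
  obtain ⟨k, hk⟩ := (htend.eventually (eventually_gt_nhds
    (show ∫ ω, |F ω| ∂ρ - ε < ∫ ω, |F ω| ∂ρ by linarith))).exists
  refine ⟨(SimpleFunc.eapprox G k).map ENNReal.toReal, fun ω => ENNReal.toReal_nonneg, ?_, ?_⟩
  · intro ω
    have : (SimpleFunc.eapprox G k ω).toReal ≤ (G ω).toReal :=
      ENNReal.toReal_mono ENNReal.ofReal_ne_top (hble k ω)
    simpa [hGdef, ENNReal.toReal_ofReal (abs_nonneg (F ω))] using this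
  · have heq : ∫ ω, ((SimpleFunc.eapprox G k).map ENNReal.toReal) ω ∂ρ
        = (∫⁻ ω, SimpleFunc.eapprox G k ω ∂ρ).toReal := by
      show ∫ ω, (SimpleFunc.eapprox G k ω).toReal ∂ρ = _
      rw [integral_eq_lintegral_of_nonneg_ae
        (Filter.Eventually.of_forall fun ω => ENNReal.toReal_nonneg)
        (((SimpleFunc.eapprox G k).map ENNReal.toReal).stronglyMeasurable.aestronglyMeasurable :
          AEStronglyMeasurable (fun ω => (SimpleFunc.eapprox G k ω).toReal) ρ)]
      congr 1
      refine lintegral_congr fun ω => ?_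
      exact ENNReal.ofReal_toReal ((lt_of_le_of_lt (hble k ω) ENNReal.ofReal_lt_top).ne)
    rw [heq]
    exact hk

end Aux

/-- if `X` has a normalized monotone Schauder basis with basis projections `P n`
and `m_n := P_n ∘ m`, then every `f ∈ L¹(m)` is in `L¹(m_n)` for all `n` and
`‖f‖_{L¹(m_n)} → ‖f‖_{L¹(m)}`. -/
theorem stmt6 {Ω X : Type*} [MeasurableSpace Ω] [NormedAddCommGroup X] [NormedSpace ℝ X]
    [CompleteSpace X]
    (e : ℕ → X) (b : ℕ → (X →L[ℝ] ℝ))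
    -- biorthogonal functionals of a normalized basis:
    (hbi : ∀ i j : ℕ, b i (e j) = if i = j then 1 else 0)
    (hnorm : ∀ i : ℕ, ‖e i‖ = 1)
    -- basis projections `P n`, with basis constant 1 (monotone) and pointwise convergence:
    (P : ℕ → (X →L[ℝ] X))
    (hP : ∀ n : ℕ, P n = ∑ i ∈ Finset.range n, (b i).smulRight (e i))
    (hmono : ∀ n : ℕ, ‖P n‖ ≤ 1)
    (hconv : ∀ x : X, Tendsto (fun n : ℕ => P n x) atTop (nhds x))
    (m : VectorMeasure Ω X) :
    ∀ f : Ω → ℝ, MemL1 m f →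
      (∀ n : ℕ, MemL1 (compVM (P n) m) f) ∧
      Tendsto (fun n : ℕ => l1norm (compVM (P n) m) f) atTop (nhds (l1norm m f)) := by
  intro f hf
  have hmem : ∀ n : ℕ, MemL1 (compVM (P n) m) f := by
    intro n x
    rw [scal_compVM]
    exact hf _
  refine ⟨hmem, ?_⟩
  classical
  -- a single measurable representative of `f` valid for all scalarizations
  obtain ⟨F, hFsm, hfF⟩ : ∃ F : Ω → ℝ, StronglyMeasurable F ∧
      f =ᵐ[Measure.sum (fun i : ℕ => (scal m (b i)).totalVariation)] F := by
    have hfae : AEStronglyMeasurable f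
        (Measure.sum (fun i : ℕ => (scal m (b i)).totalVariation)) := by
      rw [aestronglyMeasurable_sum_measure_iff]
      exact fun i => (hf (b i)).aestronglyMeasurable
    exact ⟨hfae.mk f, hfae.stronglyMeasurable_mk, hfae.ae_eq_mk⟩
  have hFmeas : Measurable F := hFsm.measurable
  have habs : ∀ y : X →L[ℝ] ℝ, (scal m y).totalVariation
      ≪ Measure.sum (fun i : ℕ => (scal m (b i)).totalVariation) := by
    intro y
    refine Measure.AbsolutelyContinuous.mk fun A hA h0 => ?_
    have hzero : ∀ i, (scal m (b i)).totalVariation A = 0 := by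
      rw [Measure.sum_apply _ hA] at h0
      exact fun i => by simpa using (ENNReal.tsum_eq_zero.mp h0 i)
    have hmB : ∀ B : Set Ω, B ⊆ A → MeasurableSet B → m B = 0 := by
      intro B hBA hB
      have hib : ∀ i, b i (m B) = 0 := by
        intro i
        have hz : (scal m (b i)).totalVariation B = 0 :=
          le_antisymm ((measure_mono hBA).trans (hzero i).le) (zero_le)
        have := SignedMeasure.null_of_totalVariation_zero _ hz
        rwa [scal_apply'] at this
      have h1 : Tendsto (fun n => P n (m B)) atTop (nhds (m B)) := hconv _
      have h2 : ∀ n, P n (m B) = 0 := by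
        intro n
        rw [hP n]
        simp only [ContinuousLinearMap.sum_apply, ContinuousLinearMap.smulRight_apply]
        exact Finset.sum_eq_zero fun i _ => by rw [hib i, zero_smul]
      have h3 : Tendsto (fun n : ℕ => (0 : X)) atTop (nhds (m B)) := by
        simpa [h2] using h1
      exact tendsto_nhds_unique h3 tendsto_const_nhds
    exact tv_zero_of_subsets _ hA
      (fun B hBA hB => by rw [scal_apply', hmB B hBA hB, map_zero])
  have hae : ∀ y : X →L[ℝ] ℝ, f =ᵐ[(scal m y).totalVariation] F :=
    fun y => hfF.filter_mono (habs y).ae_le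
  have hIF : ∀ y : X →L[ℝ] ℝ, ∫ ω, |f ω| ∂(scal m y).totalVariation
      = ∫ ω, |F ω| ∂(scal m y).totalVariation :=
    fun y => integral_congr_ae ((hae y).mono fun ω h => by simp only []; rw [h])
  have hFint : ∀ y : X →L[ℝ] ℝ, Integrable F (scal m y).totalVariation :=
    fun y => (hf y).congr (hae y)
  -- boundedness of the range of `m`
  obtain ⟨M, hM0, hM⟩ : ∃ M : ℝ, 0 ≤ M ∧ ∀ A : Set Ω, ‖m A‖ ≤ M := by
    obtain ⟨C, hC⟩ := banach_steinhaus (ι := Set Ω)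
      (g := fun A => NormedSpace.inclusionInDoubleDual ℝ X (m A)) (by
        intro y
        refine ⟨((scal m y).totalVariation Set.univ).toReal, fun A => ?_⟩
        have h1 : ‖NormedSpace.inclusionInDoubleDual ℝ X (m A) y‖ = |scal m y A| := by
          rw [NormedSpace.dual_def, scal_apply', Real.norm_eq_abs]
        rw [h1]
        exact abs_apply_le_tv _ _)
    refine ⟨C, le_trans (norm_nonneg _) (hC ∅), fun A => ?_⟩
    have hiso : ‖NormedSpace.inclusionInDoubleDual ℝ X (m A)‖ = ‖m A‖ :=
      (NormedSpace.inclusionInDoubleDualLi ℝ (E := X)).norm_map (m A)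
    rw [← hiso]
    exact hC A
  -- uniform bound on the scalarized L¹ norms
  obtain ⟨C, hC0, hCb⟩ : ∃ C : ℝ, 0 ≤ C ∧ ∀ y : X →L[ℝ] ℝ,
      ∫ ω, |F ω| ∂(scal m y).totalVariation ≤ C * ‖y‖ := by
    set gf : Set Ω → ℕ → Ω → ℝ := fun A k => (A ∩ {ω | |F ω| ≤ (k:ℝ)}).indicator F with hgf
    have gmeas : ∀ (A : Set Ω), MeasurableSet A → ∀ k : ℕ, Measurable (gf A k) := fun A hA k =>
      hFmeas.indicator (hA.inter (measurableSet_le hFmeas.abs measurable_const))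
    have gbd : ∀ (A : Set Ω) (k : ℕ) (ω : Ω), |gf A k ω| ≤ (k:ℝ) := by
      intro A k ω
      by_cases hω : ω ∈ A ∩ {ω | |F ω| ≤ (k:ℝ)}
      · simp only [hgf, Set.indicator_of_mem hω]; exact hω.2
      · simp only [hgf, Set.indicator_of_notMem hω]
        simpa using (Nat.cast_nonneg k : (0:ℝ) ≤ k)
    have gdom : ∀ (A : Set Ω) (k : ℕ) (ω : Ω), |gf A k ω| ≤ |F ω| := by
      intro A k ω
      by_cases hω : ω ∈ A ∩ {ω | |F ω| ≤ (k:ℝ)}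
      · simp [hgf, Set.indicator_of_mem hω]
      · simp [hgf, Set.indicator_of_notMem hω]
    have gint : ∀ (A : Set Ω), MeasurableSet A → ∀ (k : ℕ) (y : X →L[ℝ] ℝ),
        Integrable (gf A k) (scal m y).totalVariation :=
      fun A hA k y => integrable_of_bdd ((gmeas A hA k).aestronglyMeasurable) (gbd A k)
    have hTVle : ∀ y : X →L[ℝ] ℝ,
        ((scal m y).totalVariation Set.univ).toReal ≤ 2 * (M * ‖y‖) := by
      intro y
      obtain ⟨u, hu, he⟩ := tv_univ_toReal (scal m y)
      have b1 : |scal m y uᶜ| ≤ M * ‖y‖ := by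
        rw [scal_apply', ← Real.norm_eq_abs]
        calc ‖y (m uᶜ)‖ ≤ ‖y‖ * ‖m uᶜ‖ := y.le_opNorm _
          _ ≤ ‖y‖ * M := mul_le_mul_of_nonneg_left (hM _) (norm_nonneg _)
          _ = M * ‖y‖ := mul_comm _ _
      have b2 : |scal m y u| ≤ M * ‖y‖ := by
        rw [scal_apply', ← Real.norm_eq_abs]
        calc ‖y (m u)‖ ≤ ‖y‖ * ‖m u‖ := y.le_opNorm _
          _ ≤ ‖y‖ * M := mul_le_mul_of_nonneg_left (hM _) (norm_nonneg _)
          _ = M * ‖y‖ := mul_comm _ _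
      rw [he]
      linarith [(abs_le.mp b1).1, (abs_le.mp b1).2, (abs_le.mp b2).1, (abs_le.mp b2).2]
    have Tmk : ∀ (p : {A : Set Ω // MeasurableSet A} × ℕ),
        ∃ T : (X →L[ℝ] ℝ) →L[ℝ] ℝ, ∀ y, T y = sint (scal m y) (gf p.1.1 p.2) := by
      rintro ⟨⟨A, hA⟩, k⟩
      have hadd : ∀ y z : X →L[ℝ] ℝ, sint (scal m (y+z)) (gf A k)
          = sint (scal m y) (gf A k) + sint (scal m z) (gf A k) := by
        intro y z
        rw [scal_add_right]
        exact sint_add_measure _ _ _ (gint A hA k y) (gint A hA k z)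
          (scal_add_right m y z ▸ gint A hA k (y+z))
      set hom : (X →L[ℝ] ℝ) →+ ℝ :=
        AddMonoidHom.mk' (fun y => sint (scal m y) (gf A k)) hadd with hhom
      have hb : ∀ y : X →L[ℝ] ℝ, |hom y| ≤ (2 * M * k) * ‖y‖ := by
        intro y
        calc |hom y| ≤ ∫ ω, |gf A k ω| ∂(scal m y).totalVariation :=
            abs_sint_le _ _ (gint A hA k y)
          _ ≤ (k:ℝ) * ((scal m y).totalVariation Set.univ).toReal :=
            integral_abs_le_of_bdd ((gmeas A hA k).aestronglyMeasurable) (gbd A k)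
          _ ≤ (k:ℝ) * (2 * (M * ‖y‖)) :=
            mul_le_mul_of_nonneg_left (hTVle y) (Nat.cast_nonneg k)
          _ = (2 * M * k) * ‖y‖ := by ring
      have hlip : LipschitzWith (Real.toNNReal (2 * M * k)) hom := by
        refine LipschitzWith.of_dist_le_mul fun y z => ?_
        rw [dist_eq_norm, dist_eq_norm, ← map_sub, Real.norm_eq_abs]
        calc |hom (y - z)| ≤ (2 * M * k) * ‖y - z‖ := hb _
          _ ≤ (Real.toNNReal (2 * M * k) : ℝ) * ‖y - z‖ :=
            mul_le_mul_of_nonneg_right (Real.le_coe_toNNReal _) (norm_nonneg _)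
      exact ⟨hom.toRealLinearMap hlip.continuous, fun y => rfl⟩
    choose T hT using Tmk
    obtain ⟨C₀, hC₀⟩ := banach_steinhaus (g := T) (by
      intro y
      refine ⟨∫ ω, |F ω| ∂(scal m y).totalVariation, fun p => ?_⟩
      rw [hT p y, Real.norm_eq_abs]
      calc |sint (scal m y) (gf p.1.1 p.2)|
          ≤ ∫ ω, |gf p.1.1 p.2 ω| ∂(scal m y).totalVariation :=
            abs_sint_le _ _ (gint p.1.1 p.1.2 p.2 y)
        _ ≤ ∫ ω, |F ω| ∂(scal m y).totalVariation :=
            integral_mono (gint p.1.1 p.1.2 p.2 y).abs (hFint y).abs (gdom p.1.1 p.2))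
    have hC₀0 : 0 ≤ C₀ := le_trans (norm_nonneg _) (hC₀ (⟨∅, MeasurableSet.empty⟩, 0))
    refine ⟨2 * C₀, by linarith, ?_⟩
    intro y
    obtain ⟨u, hu, h1, h2⟩ := (scal m y).toJordanDecomposition.mutuallySingular
    set A : Set Ω := {ω | 0 ≤ F ω ∧ ω ∈ uᶜ} ∪ {ω | F ω < 0 ∧ ω ∈ u} with hAdef
    have hA : MeasurableSet A := by
      refine MeasurableSet.union ?_ ?_
      · exact ((measurableSet_le measurable_const hFmeas).inter hu.compl)
      · exact ((measurableSet_lt hFmeas measurable_const).inter hu)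
    set φ : ℕ → Ω → ℝ := fun k => ({ω | |F ω| ≤ (k:ℝ)}).indicator (fun ω => |F ω|) with hφ
    have φmeas : ∀ k : ℕ, Measurable (φ k) := fun k =>
      hFmeas.abs.indicator (measurableSet_le hFmeas.abs measurable_const)
    have φbd : ∀ (k : ℕ) (ω : Ω), |φ k ω| ≤ (k:ℝ) := by
      intro k ω
      by_cases hω : ω ∈ {ω | |F ω| ≤ (k:ℝ)}
      · simp only [hφ, Set.indicator_of_mem hω, abs_abs]; exact hω
      · simp only [hφ, Set.indicator_of_notMem hω]
        simpa using (Nat.cast_nonneg k : (0:ℝ) ≤ k)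
    have φdom : ∀ (k : ℕ) (ω : Ω), |φ k ω| ≤ |F ω| := by
      intro k ω
      by_cases hω : ω ∈ {ω | |F ω| ≤ (k:ℝ)}
      · simp [hφ, Set.indicator_of_mem hω]
      · simp [hφ, Set.indicator_of_notMem hω]
    have φint : ∀ k : ℕ, Integrable (φ k) (scal m y).totalVariation :=
      fun k => integrable_of_bdd (φmeas k).aestronglyMeasurable (φbd k)
    have hmemφ : ∀ (k : ℕ) (ω : Ω), |F ω| ≤ (k:ℝ) → φ k ω = |F ω| := by
      intro k ω hk
      simp only [hφ]
      exact Set.indicator_of_mem (show ω ∈ {x | |F x| ≤ (k:ℝ)} from hk) _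
    have hnmemφ : ∀ (k : ℕ) (ω : Ω), ¬ (|F ω| ≤ (k:ℝ)) → φ k ω = 0 := by
      intro k ω hk
      simp only [hφ]
      exact Set.indicator_of_notMem (show ω ∉ {x | |F x| ≤ (k:ℝ)} from hk) _
    have hptc : ∀ (k : ℕ) (ω : Ω), ω ∉ u → gf A k ω - gf Aᶜ k ω = φ k ω := by
      intro k ω hω
      by_cases hk : |F ω| ≤ (k:ℝ)
      · by_cases hF0 : 0 ≤ F ω
        · have hωA : ω ∈ A := Or.inl ⟨hF0, hω⟩
          have m1 : ω ∈ A ∩ {x | |F x| ≤ (k:ℝ)} := ⟨hωA, hk⟩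
          have m2 : ω ∉ Aᶜ ∩ {x | |F x| ≤ (k:ℝ)} := fun hc => hc.1 hωA
          simp only [hgf]
          rw [Set.indicator_of_mem m1, Set.indicator_of_notMem m2,
            hmemφ k ω hk, abs_of_nonneg hF0, sub_zero]
        · have hωA : ω ∉ A := by
            rintro (⟨h0, _⟩ | ⟨_, hu'⟩)
            · exact hF0 h0
            · exact hω hu'
          have m1 : ω ∉ A ∩ {x | |F x| ≤ (k:ℝ)} := fun hc => hωA hc.1
          have m2 : ω ∈ Aᶜ ∩ {x | |F x| ≤ (k:ℝ)} := ⟨hωA, hk⟩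
          simp only [hgf]
          rw [Set.indicator_of_notMem m1, Set.indicator_of_mem m2,
            hmemφ k ω hk, abs_of_neg (lt_of_not_ge hF0)]
          ring
      · have m1 : ω ∉ A ∩ {x | |F x| ≤ (k:ℝ)} := fun hc => hk hc.2
        have m2 : ω ∉ Aᶜ ∩ {x | |F x| ≤ (k:ℝ)} := fun hc => hk hc.2
        simp only [hgf]
        rw [Set.indicator_of_notMem m1, Set.indicator_of_notMem m2,
          hnmemφ k ω hk, sub_zero]
    have hptu : ∀ (k : ℕ) (ω : Ω), ω ∈ u → gf A k ω - gf Aᶜ k ω = -φ k ω := by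
      intro k ω hω
      by_cases hk : |F ω| ≤ (k:ℝ)
      · by_cases hF0 : F ω < 0
        · have hωA : ω ∈ A := Or.inr ⟨hF0, hω⟩
          have m1 : ω ∈ A ∩ {x | |F x| ≤ (k:ℝ)} := ⟨hωA, hk⟩
          have m2 : ω ∉ Aᶜ ∩ {x | |F x| ≤ (k:ℝ)} := fun hc => hc.1 hωA
          simp only [hgf]
          rw [Set.indicator_of_mem m1, Set.indicator_of_notMem m2,
            hmemφ k ω hk, abs_of_neg hF0]
          ring
        · have hωA : ω ∉ A := by
            rintro (⟨_, hu'⟩ | ⟨hn, _⟩)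
            · exact hu' hω
            · exact hF0 hn
          have m1 : ω ∉ A ∩ {x | |F x| ≤ (k:ℝ)} := fun hc => hωA hc.1
          have m2 : ω ∈ Aᶜ ∩ {x | |F x| ≤ (k:ℝ)} := ⟨hωA, hk⟩
          simp only [hgf]
          rw [Set.indicator_of_notMem m1, Set.indicator_of_mem m2,
            hmemφ k ω hk, abs_of_nonneg (le_of_not_gt hF0)]
          ring
      · have m1 : ω ∉ A ∩ {x | |F x| ≤ (k:ℝ)} := fun hc => hk hc.2
        have m2 : ω ∉ Aᶜ ∩ {x | |F x| ≤ (k:ℝ)} := fun hc => hk hc.2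
        simp only [hgf]
        rw [Set.indicator_of_notMem m1, Set.indicator_of_notMem m2,
          hnmemφ k ω hk, sub_zero, neg_zero]
    have hkey : ∀ k : ℕ, ∫ ω, φ k ω ∂(scal m y).totalVariation
        = T (⟨A, hA⟩, k) y - T (⟨Aᶜ, hA.compl⟩, k) y := by
      intro k
      obtain ⟨ipos, ineg⟩ := integrable_tv_iff_s6.mp (gint A hA k y)
      obtain ⟨ipos', ineg'⟩ := integrable_tv_iff_s6.mp (gint Aᶜ hA.compl k y)
      have hposu : ∀ᵐ ω ∂(scal m y).toJordanDecomposition.posPart, ω ∉ u :=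
        measure_eq_zero_iff_ae_notMem.mp h1
      have hnegu : ∀ᵐ ω ∂(scal m y).toJordanDecomposition.negPart, ω ∈ u := by
        have h3 := measure_eq_zero_iff_ae_notMem.mp h2
        exact h3.mono fun ω h => by simpa using h
      have e1 : ∫ ω, (gf A k ω - gf Aᶜ k ω) ∂(scal m y).toJordanDecomposition.posPart
          = ∫ ω, φ k ω ∂(scal m y).toJordanDecomposition.posPart :=
        integral_congr_ae (hposu.mono fun ω hω => hptc k ω hω)
      have e2 : ∫ ω, (gf A k ω - gf Aᶜ k ω) ∂(scal m y).toJordanDecomposition.negPart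
          = ∫ ω, (-φ k ω) ∂(scal m y).toJordanDecomposition.negPart :=
        integral_congr_ae (hnegu.mono fun ω hω => hptu k ω hω)
      rw [integral_sub ipos ipos'] at e1
      rw [integral_sub ineg ineg', integral_neg] at e2
      rw [hT _ y, hT _ y, sint, sint, integral_tv_s6 (φint k)]
      have : (⟨A, hA⟩ : {A : Set Ω // MeasurableSet A}).1 = A := rfl
      linarith [e1, e2]
    have hkb : ∀ k : ℕ, ∫ ω, φ k ω ∂(scal m y).totalVariation ≤ 2 * C₀ * ‖y‖ := by
      intro k
      rw [hkey k]
      have b1 : |T (⟨A, hA⟩, k) y| ≤ C₀ * ‖y‖ := by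
        rw [← Real.norm_eq_abs]
        calc ‖T (⟨A, hA⟩, k) y‖ ≤ ‖T (⟨A, hA⟩, k)‖ * ‖y‖ := (T _).le_opNorm y
          _ ≤ C₀ * ‖y‖ := mul_le_mul_of_nonneg_right (hC₀ _) (norm_nonneg _)
      have b2 : |T (⟨Aᶜ, hA.compl⟩, k) y| ≤ C₀ * ‖y‖ := by
        rw [← Real.norm_eq_abs]
        calc ‖T (⟨Aᶜ, hA.compl⟩, k) y‖ ≤ ‖T (⟨Aᶜ, hA.compl⟩, k)‖ * ‖y‖ := (T _).le_opNorm y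
          _ ≤ C₀ * ‖y‖ := mul_le_mul_of_nonneg_right (hC₀ _) (norm_nonneg _)
      have := (abs_le.mp b1).2
      have := (abs_le.mp b2).1
      linarith [(abs_le.mp b1).2, (abs_le.mp b2).1]
    have htendφ : Tendsto (fun k => ∫ ω, φ k ω ∂(scal m y).totalVariation) atTop
        (nhds (∫ ω, |F ω| ∂(scal m y).totalVariation)) := by
      refine tendsto_integral_of_dominated_convergence (fun ω => |F ω|)
        (fun k => (φmeas k).aestronglyMeasurable) (hFint y).abs
        (fun k => Filter.Eventually.of_forall fun ω => by
          rw [Real.norm_eq_abs]; exact φdom k ω)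
        (Filter.Eventually.of_forall fun ω => ?_)
      refine Tendsto.congr' ?_ (tendsto_const_nhds (x := |F ω|))
      rw [Filter.eventuallyEq_iff_exists_mem]
      refine ⟨{k : ℕ | ⌈|F ω|⌉₊ ≤ k}, mem_atTop _, fun k hk => ?_⟩
      have hkk : |F ω| ≤ (k:ℝ) := Nat.ceil_le.mp hk
      exact (hmemφ k ω hkk).symm
    exact le_of_tendsto htendφ (Filter.Eventually.of_forall hkb)
  -- the sup families are bounded
  have hC' : ∀ y : X →L[ℝ] ℝ, ‖y‖ ≤ 1 → ∫ ω, |f ω| ∂(scal m y).totalVariation ≤ C := by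
    intro y hy
    rw [hIF y]
    calc ∫ ω, |F ω| ∂(scal m y).totalVariation ≤ C * ‖y‖ := hCb y
      _ ≤ C * 1 := mul_le_mul_of_nonneg_left hy hC0
      _ = C := mul_one C
  haveI hne : Nonempty {x : X →L[ℝ] ℝ // ‖x‖ ≤ 1} := ⟨⟨0, by simp⟩⟩
  have hBdd : BddAbove (Set.range fun x : {x : X →L[ℝ] ℝ // ‖x‖ ≤ 1} =>
      ∫ ω, |f ω| ∂(scal m x.1).totalVariation) := by
    refine ⟨C, ?_⟩
    rintro _ ⟨x, rfl⟩
    exact hC' x.1 x.2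
  have hnormc : ∀ (n : ℕ) (x : {x : X →L[ℝ] ℝ // ‖x‖ ≤ 1}), ‖x.1.comp (P n)‖ ≤ 1 := by
    intro n x
    calc ‖x.1.comp (P n)‖ ≤ ‖x.1‖ * ‖P n‖ := ContinuousLinearMap.opNorm_comp_le _ _
      _ ≤ 1 * 1 := mul_le_mul x.2 (hmono n) (norm_nonneg _) zero_le_one
      _ = 1 := one_mul 1
  have hBddn : ∀ n : ℕ, BddAbove (Set.range fun x : {x : X →L[ℝ] ℝ // ‖x‖ ≤ 1} =>
      ∫ ω, |f ω| ∂(scal (compVM (P n) m) x.1).totalVariation) := by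
    intro n
    refine ⟨C, ?_⟩
    rintro _ ⟨x, rfl⟩
    show ∫ ω, |f ω| ∂(scal (compVM (P n) m) x.1).totalVariation ≤ C
    rw [scal_compVM]
    exact hC' _ (hnormc n x)
  have hupper : ∀ n : ℕ, l1norm (compVM (P n) m) f ≤ l1norm m f := by
    intro n
    refine ciSup_le fun x => ?_
    rw [scal_compVM]
    exact le_ciSup hBdd (⟨x.1.comp (P n), hnormc n x⟩ : {x : X →L[ℝ] ℝ // ‖x‖ ≤ 1})
  rw [Metric.tendsto_atTop]
  intro ε hε
  have hlt : l1norm m f - ε/3 < ⨆ x : {x : X →L[ℝ] ℝ // ‖x‖ ≤ 1},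
      ∫ ω, |f ω| ∂(scal m x.1).totalVariation := by
    have hrfl : (⨆ x : {x : X →L[ℝ] ℝ // ‖x‖ ≤ 1},
        ∫ ω, |f ω| ∂(scal m x.1).totalVariation) = l1norm m f := rfl
    rw [hrfl]; linarith
  obtain ⟨x₀, hx₀⟩ := exists_lt_of_lt_ciSup hlt
  obtain ⟨u₀, hu₀, hp₀, hn₀⟩ := (scal m x₀.1).toJordanDecomposition.mutuallySingular
  obtain ⟨h, hh0, hhF, hhint⟩ := exists_simple_approx ((scal m x₀.1).totalVariation) hFmeas
    (hFint x₀.1) (show (0:ℝ) < ε/3 by linarith)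
  set σ : SimpleFunc Ω ℝ := SimpleFunc.piecewise u₀ hu₀ (SimpleFunc.const Ω (-1:ℝ))
    (SimpleFunc.const Ω (1:ℝ)) with hσ
  set g : SimpleFunc Ω ℝ := h * σ with hg
  have hgval : ∀ ω, g ω = if ω ∈ u₀ then -(h ω) else h ω := by
    intro ω
    simp only [hg, SimpleFunc.coe_mul, Pi.mul_apply, hσ, SimpleFunc.piecewise_apply,
      SimpleFunc.coe_const, Function.const_apply]
    by_cases hω : ω ∈ u₀
    · rw [if_pos hω, if_pos hω]; ring
    · rw [if_neg hω, if_neg hω]; ring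
  have hgabs : ∀ ω, |g ω| = h ω := by
    intro ω
    rw [hgval ω]
    by_cases hω : ω ∈ u₀
    · rw [if_pos hω, abs_neg, abs_of_nonneg (hh0 ω)]
    · rw [if_neg hω, abs_of_nonneg (hh0 ω)]
  have hxint : ∀ (y : X →L[ℝ] ℝ), Integrable g (scal m y).totalVariation :=
    fun y => integrable_simple g _
  have hsint₀ : sint (scal m x₀.1) g = ∫ ω, h ω ∂(scal m x₀.1).totalVariation := by
    have hposu : ∀ᵐ ω ∂(scal m x₀.1).toJordanDecomposition.posPart, ω ∉ u₀ :=
      measure_eq_zero_iff_ae_notMem.mp hp₀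
    have hnegu : ∀ᵐ ω ∂(scal m x₀.1).toJordanDecomposition.negPart, ω ∈ u₀ := by
      have h3 := measure_eq_zero_iff_ae_notMem.mp hn₀
      exact h3.mono fun ω hh => by simpa using hh
    have e1 : ∫ ω, g ω ∂(scal m x₀.1).toJordanDecomposition.posPart
        = ∫ ω, h ω ∂(scal m x₀.1).toJordanDecomposition.posPart := by
      refine integral_congr_ae (hposu.mono fun ω hω => ?_)
      show g ω = h ω
      rw [hgval ω, if_neg hω]
    have e2 : ∫ ω, g ω ∂(scal m x₀.1).toJordanDecomposition.negPart
        = ∫ ω, -(h ω) ∂(scal m x₀.1).toJordanDecomposition.negPart := by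
      refine integral_congr_ae (hnegu.mono fun ω hω => ?_)
      show g ω = -(h ω)
      rw [hgval ω, if_pos hω]
    rw [sint, e1, e2, integral_neg, integral_tv_s6 (integrable_simple h _)]
    ring
  have hx₀' : l1norm m f - ε/3 < ∫ ω, |F ω| ∂(scal m x₀.1).totalVariation := by
    rw [← hIF x₀.1]; exact hx₀
  have hval : l1norm m f - 2*(ε/3) < sint (scal m x₀.1) g := by
    rw [hsint₀]; linarith
  have hdom : ∀ y : X →L[ℝ] ℝ, sint (scal m y) g
      ≤ ∫ ω, |f ω| ∂(scal m y).totalVariation := by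
    intro y
    calc sint (scal m y) g ≤ |sint (scal m y) g| := le_abs_self _
      _ ≤ ∫ ω, |g ω| ∂(scal m y).totalVariation := abs_sint_le _ _ (hxint y)
      _ ≤ ∫ ω, |F ω| ∂(scal m y).totalVariation := by
          refine integral_mono (hxint y).abs (hFint y).abs fun ω => ?_
          show |g ω| ≤ |F ω|
          rw [hgabs ω]; exact hhF ω
      _ = ∫ ω, |f ω| ∂(scal m y).totalVariation := (hIF y).symm
  have hvg : ∀ y : X →L[ℝ] ℝ, sint (scal m y) g = y (vInt m g) :=
    fun y => sint_scal_simple m y g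
  have hconvv : Tendsto (fun n => x₀.1 (P n (vInt m g))) atTop (nhds (x₀.1 (vInt m g))) :=
    (x₀.1.continuous.tendsto _).comp (hconv (vInt m g))
  have hlim : l1norm m f - ε < x₀.1 (vInt m g) := by
    rw [← hvg]; linarith
  have hev : ∀ᶠ n in atTop, l1norm m f - ε < x₀.1 (P n (vInt m g)) :=
    hconvv.eventually (eventually_gt_nhds hlim)
  have hlower : ∀ n : ℕ, x₀.1 (P n (vInt m g)) ≤ l1norm (compVM (P n) m) f := by
    intro n
    have e1 : sint (scal m (x₀.1.comp (P n))) g = x₀.1 (P n (vInt m g)) :=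
      hvg (x₀.1.comp (P n))
    have e2 : sint (scal m (x₀.1.comp (P n))) g
        ≤ ∫ ω, |f ω| ∂(scal (compVM (P n) m) x₀.1).totalVariation := by
      rw [scal_compVM]
      exact hdom _
    rw [← e1]
    exact le_trans e2 (le_ciSup (hBddn n) x₀)
  obtain ⟨N, hN⟩ := eventually_atTop.mp hev
  refine ⟨N, fun n hn => ?_⟩
  have l1 : l1norm m f - ε < l1norm (compVM (P n) m) f :=
    lt_of_lt_of_le (hN n hn) (hlower n)
  have l2 : l1norm (compVM (P n) m) f ≤ l1norm m f := hupper n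
  rw [Real.dist_eq, abs_sub_lt_iff]
  constructor <;> linarith
end

section
/- If a Banach space X has the Daugavet property, then the identity operator on X cannot be written as a pointwise unconditionally convergent series Σ_{n ∈ Γ} T_n of weakly compact operators T_n : X → X. In particular, X has no unconditional basis. -/
open Filter Topology Pointwise

set_option maxHeartbeats 1600000

/-- A Banach space has the Daugavet property if `‖Id + T‖ = 1 + ‖T‖` for every
rank-one operator `T`. -/
def DaugavetProperty (X : Type*) [NormedAddCommGroup X] [NormedSpace ℝ X] : Prop :=
  ∀ (φ : X →L[ℝ] ℝ) (y : X),
    ‖ContinuousLinearMap.id ℝ X + φ.smulRight y‖ = 1 + ‖φ.smulRight y‖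

/-- `T` is weakly compact: the image of the closed unit ball is relatively compact in the
weak topology. -/
def WeaklyCompactOp {X : Type*} [NormedAddCommGroup X] [NormedSpace ℝ X]
    (T : X →L[ℝ] X) : Prop :=
  IsCompact (closure ((toWeakSpaceCLM ℝ X) '' (T '' Metric.closedBall 0 1)))

section Auxiliary

variable {X : Type*} [NormedAddCommGroup X] [NormedSpace ℝ X]

namespace Stmt13

/-- From `r < ‖T‖` get a ball point with big image. -/
lemma exists_ball_lt {T : X →L[ℝ] X} {r : ℝ} (h : r < ‖T‖) :
    ∃ x : X, ‖x‖ ≤ 1 ∧ r < ‖T x‖ := by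
  by_contra hc
  push_neg at hc
  rcases le_or_gt 0 r with hr | hr
  · have : ‖T‖ ≤ r := by
      apply ContinuousLinearMap.opNorm_le_bound _ hr
      intro x
      rcases eq_or_ne x 0 with rfl | hx
      · simp
      · have hxn : 0 < ‖x‖ := norm_pos_iff.2 hx
        have h1 : ‖T (‖x‖⁻¹ • x)‖ ≤ r := by
          apply hc
          rw [norm_smul, norm_inv, norm_norm]
          exact le_of_eq (inv_mul_cancel₀ hxn.ne')
        rw [map_smul, norm_smul, norm_inv, norm_norm] at h1
        have := mul_le_mul_of_nonneg_left h1 hxn.le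
        rwa [← mul_assoc, mul_inv_cancel₀ hxn.ne', one_mul, mul_comm] at this
    exact absurd (lt_of_lt_of_le h this) (lt_irrefl r)
  · have := hc 0 (by simp)
    simp at this
    exact absurd (lt_of_lt_of_le hr this) (lt_irrefl r)

lemma norm_id_eq_one (hX : DaugavetProperty X) : ‖ContinuousLinearMap.id ℝ X‖ = 1 := by
  have h := hX 0 0
  have h0 : (ContinuousLinearMap.smulRight (0 : X →L[ℝ] ℝ) (0:X)) = 0 := by
    ext x; simp
  rw [h0] at h
  simpa using h

lemma exists_unit (hX : DaugavetProperty X) : ∃ y : X, ‖y‖ = 1 := by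
  have h1 : (0:ℝ) < ‖ContinuousLinearMap.id ℝ X‖ := by rw [norm_id_eq_one hX]; norm_num
  obtain ⟨x, _, hx⟩ := exists_ball_lt h1
  simp only [ContinuousLinearMap.id_apply] at hx
  refine ⟨‖x‖⁻¹ • x, ?_⟩
  rw [norm_smul, norm_inv, norm_norm]
  exact inv_mul_cancel₀ (by positivity)

/-- The basic slice lemma from the Daugavet property. -/
lemma slice_lemma (hX : DaugavetProperty X) {g : X →L[ℝ] ℝ} (hg : ‖g‖ = 1) {y : X}
    (hy : ‖y‖ = 1) {ρ : ℝ} (hρ : 0 < ρ) (hρ1 : ρ ≤ 1/2) :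
    ∃ x : X, ‖x‖ ≤ 1 ∧ 1 - ρ < g x ∧ 2 - ρ < ‖x + y‖ := by
  have hT : ‖g.smulRight y‖ = 1 := by rw [ContinuousLinearMap.norm_smulRight_apply, hg, hy]; ring
  have h2 : ‖ContinuousLinearMap.id ℝ X + g.smulRight y‖ = 2 := by rw [hX g y, hT]; norm_num
  have hρρ : 0 < ρ^2 := by positivity
  have h3 : (2 - ρ^2 : ℝ) < ‖ContinuousLinearMap.id ℝ X + g.smulRight y‖ := by
    rw [h2]; linarith
  obtain ⟨x, hx1, hx2⟩ := exists_ball_lt h3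
  simp only [ContinuousLinearMap.add_apply, ContinuousLinearMap.id_apply,
    ContinuousLinearMap.smulRight_apply] at hx2
  -- |g x| > 1 - ρ^2
  have habs : 1 - ρ^2 < |g x| := by
    have hb : ‖x + g x • y‖ ≤ ‖x‖ + |g x| := by
      calc ‖x + g x • y‖ ≤ ‖x‖ + ‖g x • y‖ := norm_add_le _ _
        _ = ‖x‖ + |g x| := by rw [norm_smul, hy, Real.norm_eq_abs, mul_one]
    linarith
  -- wlog positive
  obtain ⟨x', hx'1, hx'2, hx'3⟩ : ∃ x' : X, ‖x'‖ ≤ 1 ∧ 1 - ρ^2 < g x' ∧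
      2 - ρ^2 < ‖x' + g x' • y‖ := by
    rcases le_or_gt 0 (g x) with hgx | hgx
    · exact ⟨x, hx1, by rwa [abs_of_nonneg hgx] at habs, hx2⟩
    · refine ⟨-x, by simpa using hx1, ?_, ?_⟩
      · rw [map_neg]; rwa [abs_of_neg hgx] at habs
      · rw [map_neg]
        have : -x + -g x • y = -(x + g x • y) := by module
        rw [this, norm_neg]
        exact hx2
  refine ⟨x', hx'1, by nlinarith, ?_⟩
  have hgle : g x' ≤ 1 := by
    calc g x' ≤ |g x'| := le_abs_self _
      _ ≤ ‖g‖ * ‖x'‖ := g.le_opNorm x'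
      _ ≤ 1 := by rw [hg]; simpa using hx'1
  have : ‖x' + y‖ ≥ ‖x' + g x' • y‖ - ‖g x' • y - y‖ := by
    have h := norm_sub_norm_le (x' + g x' • y) (g x' • y - y)
    have he : x' + g x' • y - (g x' • y - y) = x' + y := by module
    rw [he] at h
    linarith
  have h5 : ‖g x' • y - y‖ = 1 - g x' := by
    have : g x' • y - y = (g x' - 1) • y := by module
    rw [this, norm_smul, hy, Real.norm_eq_abs, mul_one, abs_of_nonpos (by linarith)]
    ring
  nlinarith


def dslice (g : X →L[ℝ] ℝ) (al : ℝ) : Set X := {x | ‖x‖ ≤ 1 ∧ al < g x}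

lemma dslice_convex (g : X →L[ℝ] ℝ) (al : ℝ) : Convex ℝ (dslice g al) := by
  have h1 : dslice g al = Metric.closedBall (0:X) 1 ∩ {x | al < g x} := by
    ext x; simp [dslice, Metric.mem_closedBall, dist_zero_right]
  rw [h1]
  exact (convex_closedBall _ _).inter (convex_halfSpace_gt (IsLinearMap.mk g.map_add g.map_smul) al)

lemma dslice_nonempty (hX : DaugavetProperty X) {g : X →L[ℝ] ℝ} (hg : ‖g‖ = 1) {al : ℝ} (hal : al < 1) :
    ∃ x, x ∈ dslice g al := by
  obtain ⟨y, hy⟩ := exists_unit hX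
  set ρ := min (1 - al) (1/2) with hρdef
  have hρ : 0 < ρ := lt_min (by linarith) (by norm_num)
  obtain ⟨x, h1, h2, _⟩ := slice_lemma hX hg hy hρ (min_le_right _ _)
  have h3 : ρ ≤ 1 - al := min_le_left _ _
  exact ⟨x, h1, by nlinarith⟩

/-- Refined slice lemma: inside any slice there is a smaller slice every point of which is
far from a given unit vector `y`. -/
lemma refine_one (hX : DaugavetProperty X) {g : X →L[ℝ] ℝ} (hg : ‖g‖ = 1) {al : ℝ} (hal : al < 1) {y : X} (hy : ‖y‖ = 1)
    {δ : ℝ} (hδ : 0 < δ) (hδ1 : δ ≤ 1) :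
    ∃ (g' : X →L[ℝ] ℝ) (al' : ℝ), ‖g'‖ = 1 ∧ al' < 1 ∧ dslice g' al' ⊆ dslice g al ∧
      ∀ x ∈ dslice g' al', 2 - δ < ‖x - y‖ := by
  set ρ := min ((1 - al)/4) (δ/8) with hρdef
  have hρpos : 0 < ρ := lt_min (by linarith) (by linarith)
  have hρ2 : ρ ≤ 1/2 := le_trans (min_le_right _ _) (by linarith)
  have hρal : 4 * ρ ≤ 1 - al := by
    have := min_le_left ((1 - al)/4) (δ/8); linarith
  have hρδ : 8 * ρ ≤ δ := by
    have := min_le_right ((1 - al)/4) (δ/8); linarith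
  have hyn : ‖-y‖ = 1 := by simpa using hy
  obtain ⟨x₀, hx₀1, hx₀2, hx₀3⟩ := slice_lemma hX hg hyn hρpos hρ2
  rw [show x₀ + -y = x₀ - y by abel] at hx₀3
  have hx₀y : x₀ - y ≠ 0 := by
    intro h
    rw [h, norm_zero] at hx₀3; linarith
  obtain ⟨u, hu1, hu2⟩ := exists_dual_vector ℝ (x₀ - y) (norm_ne_zero_iff.2 hx₀y)
  rw [RCLike.ofReal_real_eq_id, id] at hu2
  have hux₀ : 1 - ρ < u x₀ := by
    have h1 : u x₀ - u y = ‖x₀ - y‖ := by rw [← hu2, map_sub]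
    have h2 : u y ≥ -1 := by
      have := abs_le.1 (by
        calc |u y| ≤ ‖u‖ * ‖y‖ := by simpa [Real.norm_eq_abs] using u.le_opNorm y
          _ = 1 := by rw [hu1, hy, mul_one])
      linarith [this.1]
    linarith
  have huy : u y < -(1 - ρ) := by
    have h1 : u x₀ - u y = ‖x₀ - y‖ := by rw [← hu2, map_sub]
    have h2 : u x₀ ≤ 1 := by
      have := abs_le.1 (by
        calc |u x₀| ≤ ‖u‖ * ‖x₀‖ := by simpa [Real.norm_eq_abs] using u.le_opNorm x₀
          _ ≤ 1 := by rw [hu1, one_mul]; exact hx₀1)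
      linarith [this.2]
    linarith
  set G := g + u with hG
  have hGx₀ : 2 - 2*ρ < G x₀ := by
    simp only [hG, ContinuousLinearMap.add_apply]; linarith
  have hGx₀le : G x₀ ≤ ‖G‖ := by
    calc G x₀ ≤ |G x₀| := le_abs_self _
      _ ≤ ‖G‖ * ‖x₀‖ := by simpa [Real.norm_eq_abs] using G.le_opNorm x₀
      _ ≤ ‖G‖ := by simpa using mul_le_mul_of_nonneg_left hx₀1 (norm_nonneg G)
  have hGnorm_pos : 0 < ‖G‖ := by linarith
  have hmem : ∀ x ∈ dslice (‖G‖⁻¹ • G) (‖G‖⁻¹ * (G x₀ - ρ)), ‖x‖ ≤ 1 ∧ G x₀ - ρ < G x := by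
    intro x hx
    obtain ⟨hx1, hx2⟩ := hx
    refine ⟨hx1, ?_⟩
    have h4 : ‖G‖⁻¹ * (G x₀ - ρ) < ‖G‖⁻¹ * G x := by
      simpa [ContinuousLinearMap.smul_apply, smul_eq_mul] using hx2
    exact lt_of_mul_lt_mul_left h4 (by positivity)
  have key : ∀ x, ‖x‖ ≤ 1 → G x₀ - ρ < G x → (al < g x ∧ 1 - 3*ρ < u x) := by
    intro x hx1 hx2
    have hgle : g x ≤ 1 := by
      have := abs_le.1 (by
        calc |g x| ≤ ‖g‖ * ‖x‖ := by simpa [Real.norm_eq_abs] using g.le_opNorm x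
          _ ≤ 1 := by rw [hg, one_mul]; exact hx1)
      linarith [this.2]
    have hule : u x ≤ 1 := by
      have := abs_le.1 (by
        calc |u x| ≤ ‖u‖ * ‖x‖ := by simpa [Real.norm_eq_abs] using u.le_opNorm x
          _ ≤ 1 := by rw [hu1, one_mul]; exact hx1)
      linarith [this.2]
    have hGx : G x = g x + u x := by simp [hG]
    constructor
    · linarith [hGx₀, hρal, hρpos]
    · linarith [hGx₀, hρal, hρpos]
  refine ⟨‖G‖⁻¹ • G, ‖G‖⁻¹ * (G x₀ - ρ), ?_, ?_, ?_, ?_⟩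
  · rw [norm_smul (α := ℝ) (β := X →L[ℝ] ℝ) ‖G‖⁻¹ G, norm_inv, norm_norm]
    exact inv_mul_cancel₀ hGnorm_pos.ne'
  · rw [show (1:ℝ) = ‖G‖⁻¹ * ‖G‖ by rw [inv_mul_cancel₀ hGnorm_pos.ne']]
    exact mul_lt_mul_of_pos_left (by linarith) (inv_pos.2 hGnorm_pos)
  · intro x hx
    obtain ⟨hx1, hx2⟩ := hmem x hx
    exact ⟨hx1, (key x hx1 hx2).1⟩
  · intro x hx
    obtain ⟨hx1, hx2⟩ := hmem x hx
    have hux := (key x hx1 hx2).2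
    have h5 : u x - u y ≤ ‖x - y‖ := by
      calc u x - u y = u (x - y) := by rw [map_sub]
        _ ≤ |u (x - y)| := le_abs_self _
        _ ≤ ‖u‖ * ‖x - y‖ := by simpa [Real.norm_eq_abs] using u.le_opNorm (x-y)
        _ = ‖x - y‖ := by rw [hu1, one_mul]
    nlinarith

lemma refine_finset (hX : DaugavetProperty X) {g : X →L[ℝ] ℝ} (hg : ‖g‖ = 1) {al : ℝ} (hal : al < 1) (F : Finset X)
    (hF : ∀ y ∈ F, ‖y‖ = 1) {δ : ℝ} (hδ : 0 < δ) (hδ1 : δ ≤ 1) :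
    ∃ (g' : X →L[ℝ] ℝ) (al' : ℝ), ‖g'‖ = 1 ∧ al' < 1 ∧ dslice g' al' ⊆ dslice g al ∧
      ∀ x ∈ dslice g' al', ∀ y ∈ F, 2 - δ < ‖x - y‖ := by
  classical
  induction F using Finset.induction_on generalizing g al with
  | empty => exact ⟨g, al, hg, hal, le_refl _, by simp⟩
  | insert _ _ hnotmem _ =>
    rename_i y F' ih
    obtain ⟨g1, al1, hg1, hal1, hsub1, hfar1⟩ := ih hg hal
      (fun z hz => hF z (Finset.mem_insert_of_mem hz))
    obtain ⟨g2, al2, hg2, hal2, hsub2, hfar2⟩ :=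
      refine_one hX hg1 hal1 (hF y (Finset.mem_insert_self y F')) hδ hδ1
    refine ⟨g2, al2, hg2, hal2, fun x hx => hsub1 (hsub2 hx), ?_⟩
    intro x hx z hz
    rcases Finset.mem_insert.1 hz with rfl | hz'
    · exact hfar2 x hx
    · exact hfar1 x (hsub2 hx) z hz'

/-- distance bound after un-normalizing: if `z` (in the ball) is almost antipodal to
the normalization of `y`, then `‖z - y‖ ≳ 1 + ‖y‖`. -/
lemma lemD {z y : X} (hz : ‖z‖ ≤ 1) (hy : y ≠ 0) {b : ℝ} (hb : 0 ≤ b)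
    (h : 2 - b < ‖z - ‖y‖⁻¹ • y‖) :
    1 + ‖y‖ - b * max 1 ‖y‖ ≤ ‖z - y‖ := by
  have hyn : 0 < ‖y‖ := norm_pos_iff.2 hy
  rcases le_or_gt ‖y‖ 1 with hc | hc
  · rw [max_eq_left hc]
    have h0 : (1:ℝ) ≤ ‖y‖⁻¹ := (one_le_inv₀ hyn).2 hc
    have h1 : ‖y - ‖y‖⁻¹ • y‖ = 1 - ‖y‖ := by
      have he : y - ‖y‖⁻¹ • y = (1 - ‖y‖⁻¹) • y := by module
      rw [he, norm_smul, Real.norm_eq_abs, abs_of_nonpos (by linarith)]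
      have : ‖y‖⁻¹ * ‖y‖ = 1 := inv_mul_cancel₀ hyn.ne'
      nlinarith
    have h2 : ‖z - ‖y‖⁻¹ • y‖ ≤ ‖z - y‖ + ‖y - ‖y‖⁻¹ • y‖ := by
      calc ‖z - ‖y‖⁻¹ • y‖ = ‖(z - y) + (y - ‖y‖⁻¹ • y)‖ := by congr 1; abel
        _ ≤ ‖z - y‖ + ‖y - ‖y‖⁻¹ • y‖ := norm_add_le _ _
    linarith
  · rw [max_eq_right hc.le]
    set r := ‖y‖ with hr
    have hrinv : r * r⁻¹ = 1 := mul_inv_cancel₀ hyn.ne'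
    have hrinv1 : r⁻¹ ≤ 1 := by
      rw [← hrinv]; nlinarith [inv_pos.2 hyn]
    have h1 : ‖z - r⁻¹ • y‖ ≤ (1 - r⁻¹) * ‖z‖ + r⁻¹ * ‖z - y‖ := by
      calc ‖z - r⁻¹ • y‖ = ‖(1 - r⁻¹) • z + r⁻¹ • (z - y)‖ := by congr 1; module
        _ ≤ ‖(1 - r⁻¹) • z‖ + ‖r⁻¹ • (z - y)‖ := norm_add_le _ _
        _ = (1 - r⁻¹) * ‖z‖ + r⁻¹ * ‖z - y‖ := by
            rw [norm_smul, norm_smul, Real.norm_eq_abs, Real.norm_eq_abs,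
              abs_of_nonneg (by linarith), abs_of_nonneg (by positivity)]
    have h2 : 2 - b < (1 - r⁻¹) + r⁻¹ * ‖z - y‖ := by
      have : (1 - r⁻¹) * ‖z‖ ≤ 1 - r⁻¹ := by nlinarith
      linarith
    have hrpos : 0 < r⁻¹ := inv_pos.2 hyn
    nlinarith [h2]

/-- comparing normalizations. -/
lemma normalize_dist {y w : X} (hy : y ≠ 0) (hw : w ≠ 0) :
    ‖‖y‖⁻¹ • y - ‖w‖⁻¹ • w‖ ≤ 2 * ‖y - w‖ / ‖y‖ := by
  have hyn : 0 < ‖y‖ := norm_pos_iff.2 hy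
  have hwn : 0 < ‖w‖ := norm_pos_iff.2 hw
  have he : ‖y‖⁻¹ • y - ‖w‖⁻¹ • w = ‖y‖⁻¹ • (y - w) + (‖y‖⁻¹ - ‖w‖⁻¹) • w := by module
  have h3 : |‖w‖ - ‖y‖| ≤ ‖y - w‖ := by
    rw [abs_sub_comm]
    exact abs_norm_sub_norm_le y w
  have h1 : ‖(‖y‖⁻¹ - ‖w‖⁻¹) • w‖ ≤ ‖y - w‖ / ‖y‖ := by
    rw [norm_smul, Real.norm_eq_abs]
    have he2 : ‖y‖⁻¹ - ‖w‖⁻¹ = (‖w‖ - ‖y‖) / (‖y‖ * ‖w‖) := by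
      field_simp
    have h2 : |‖y‖⁻¹ - ‖w‖⁻¹| * ‖w‖ = |‖w‖ - ‖y‖| / ‖y‖ := by
      rw [he2, abs_div, abs_of_pos (by positivity : (0:ℝ) < ‖y‖ * ‖w‖)]
      field_simp
    rw [h2]
    exact (div_le_div_iff_of_pos_right hyn).2 h3
  have h4 : ‖‖y‖⁻¹ • (y - w)‖ = ‖y - w‖ / ‖y‖ := by
    rw [norm_smul, norm_inv, norm_norm]; ring
  calc ‖‖y‖⁻¹ • y - ‖w‖⁻¹ • w‖ ≤ ‖‖y‖⁻¹ • (y - w)‖ + ‖(‖y‖⁻¹ - ‖w‖⁻¹) • w‖ := by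
        rw [he]; exact norm_add_le _ _
    _ ≤ ‖y - w‖ / ‖y‖ + ‖y - w‖ / ‖y‖ := by rw [h4]; linarith
    _ = 2 * ‖y - w‖ / ‖y‖ := by ring


structure DStage (X : Type*) [NormedAddCommGroup X] [NormedSpace ℝ X] where
  g : X →L[ℝ] ℝ
  al : ℝ
  pt : X
  vs : List X

/-- validity of a stage of the construction. -/
def DValid (S : X →L[ℝ] X) (f : X →L[ℝ] ℝ) (g₀ : X →L[ℝ] ℝ) (al₀ τ : ℝ)
    (s : DStage X) : Prop :=
  ‖s.g‖ = 1 ∧ s.al < 1 ∧ dslice s.g s.al ⊆ dslice g₀ al₀ ∧ s.pt ∈ dslice s.g s.al ∧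
  (∀ v ∈ s.vs, (∃ x', ‖x'‖ ≤ 1 ∧ v = S x') ∧ τ < f v)

/-- relation between consecutive stages. -/
def DRel (S : X →L[ℝ] X) (tb a : ℝ) (s s' : DStage X) : Prop :=
  dslice s'.g s'.al ⊆ dslice s.g s.al ∧ s'.vs = s.vs ++ [S s'.pt] ∧
  ∀ x' ∈ dslice s'.g s'.al, ∀ w ∈ convexHull ℝ {u | u ∈ s.vs}, tb ≤ ‖w‖ → w ≠ 0 →
    2 - 2*a < ‖x' - ‖w‖⁻¹ • w‖

section Step

lemma step_exists (hX : DaugavetProperty X) {S : X →L[ℝ] X} {f g₀ : X →L[ℝ] ℝ} {al₀ τ tb a : ℝ}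
    (hg₀ : ‖g₀‖ = 1) (hal₀ : al₀ < 1)
    (hslice0 : ∀ x ∈ dslice g₀ al₀, τ < f (S x))
    (ha : 0 < a) (ha1 : a ≤ 1) (htb : 0 < tb)
    (s : DStage X) (hs : DValid S f g₀ al₀ τ s) :
    ∃ s', DValid S f g₀ al₀ τ s' ∧ DRel S tb a s s' := by
  classical
  obtain ⟨hsg, hsal, hssub, hspt, hsvs⟩ := hs
  set η := tb * a / 4 with hη_def
  have hηpos : 0 < η := by positivity
  have hηtb : η ≤ tb / 4 := by
    rw [hη_def]
    have : tb * a ≤ tb * 1 := by nlinarith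
    linarith
  -- compact convex hull of the recorded vectors
  have hCH : IsCompact (convexHull ℝ {u | u ∈ s.vs}) :=
    (s.vs.finite_toSet).isCompact_convexHull ℝ
  have htbd := hCH.totallyBounded
  obtain ⟨N, hNsub, hNfin, hNcov⟩ := totallyBounded_iff_subset.1 htbd
    {p : X × X | dist p.1 p.2 < η} (Metric.dist_mem_uniformity hηpos)
  -- the finite set of normalized net points with not-too-small norm
  set F : Finset X := (hNfin.toFinset.filter fun y => tb - η ≤ ‖y‖).image
    (fun y => ‖y‖⁻¹ • y) with hF_def
  have hFnorm : ∀ y ∈ F, ‖y‖ = 1 := by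
    intro y hy
    rw [hF_def, Finset.mem_image] at hy
    obtain ⟨y', hy', rfl⟩ := hy
    rw [Finset.mem_filter] at hy'
    have h1 : 0 < ‖y'‖ := by
      have := hy'.2; linarith
    rw [norm_smul, norm_inv, norm_norm]
    exact inv_mul_cancel₀ h1.ne'
  obtain ⟨g', al', hg', hal', hsub', hfar'⟩ := refine_finset hX hsg hsal F hFnorm ha ha1
  obtain ⟨pt', hpt'⟩ := dslice_nonempty hX hg' hal'
  refine ⟨⟨g', al', pt', s.vs ++ [S pt']⟩, ⟨hg', hal', fun x hx => hssub (hsub' hx), hpt', ?_⟩,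
    hsub', rfl, ?_⟩
  · intro v hv
    rcases List.mem_append.1 hv with hv1 | hv2
    · exact hsvs v hv1
    · have hv3 : v = S pt' := by simpa using hv2
      subst hv3
      have hptin : pt' ∈ dslice g₀ al₀ := hssub (hsub' hpt')
      exact ⟨⟨pt', hptin.1, rfl⟩, hslice0 pt' hptin⟩
  · intro x' hx' w hw htbw hw0
    have hwcov := hNcov hw
    simp only [Set.mem_iUnion] at hwcov
    obtain ⟨y', hy'N, hy'd⟩ := hwcov
    have hdist : ‖w - y'‖ < η := by
      rw [← dist_eq_norm]; exact hy'd
    have hy'norm : tb - η ≤ ‖y'‖ := by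
      have h2 : ‖w‖ - ‖y'‖ ≤ ‖w - y'‖ := norm_sub_norm_le w y'
      linarith
    have hy'0 : y' ≠ 0 := by
      intro h
      rw [h, norm_zero] at hy'norm
      linarith
    have hymem : ‖y'‖⁻¹ • y' ∈ F := by
      rw [hF_def, Finset.mem_image]
      exact ⟨y', Finset.mem_filter.2 ⟨hNfin.mem_toFinset.2 hy'N, hy'norm⟩, rfl⟩
    have hfar := hfar' x' hx' _ hymem
    have hnd := normalize_dist hy'0 hw0
    have hy'w : ‖y' - w‖ < η := by
      rw [norm_sub_rev]; exact hdist
    have hy'pos : 0 < ‖y'‖ := norm_pos_iff.2 hy'0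
    have hbound : 2 * ‖y' - w‖ / ‖y'‖ ≤ a := by
      rw [div_le_iff₀ hy'pos]
      nlinarith [norm_nonneg (y' - w)]
    have htri : ‖x' - ‖y'‖⁻¹ • y'‖ ≤ ‖x' - ‖w‖⁻¹ • w‖ + ‖‖y'‖⁻¹ • y' - ‖w‖⁻¹ • w‖ := by
      calc ‖x' - ‖y'‖⁻¹ • y'‖ = ‖(x' - ‖w‖⁻¹ • w) - (‖y'‖⁻¹ • y' - ‖w‖⁻¹ • w)‖ := by
            congr 1; abel
        _ ≤ _ := norm_sub_le _ _
    linarith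

end Step

section Core
lemma daugavet_aux (hX : DaugavetProperty X) {S : X →L[ℝ] X}
    (hSwc : IsCompact (closure ((toWeakSpaceCLM ℝ X) '' (S '' Metric.closedBall 0 1))))
    (htS : 0 < ‖S‖) {ε : ℝ} (hε : 0 < ε) :
    ∃ z : X, ‖z‖ ≤ 1 ∧ 1 + ‖S‖ - ε ≤ ‖z - S z‖ := by
  classical
  set t := ‖S‖ with ht_def
  have h6t : (0:ℝ) < 6 + 2*t := by linarith
  set a : ℝ := min (ε / (6 + 2*t)) (min (t/4) (1/8)) with ha_def
  have ha0 : 0 < a := lt_min (by positivity) (lt_min (by positivity) (by norm_num))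
  have haε : a * (6 + 2*t) ≤ ε := by
    have h1 : a ≤ ε / (6+2*t) := min_le_left _ _
    rw [le_div_iff₀ h6t] at h1
    linarith
  have hat : a ≤ t/4 := (min_le_right _ _).trans (min_le_left _ _)
  have ha8 : a ≤ 1/8 := (min_le_right _ _).trans (min_le_right _ _)
  have ha1 : a ≤ 1 := by linarith
  set τ := t - a^2 with hτ_def
  set tb := t - 3*a with htb_def
  have htb : 0 < tb := by rw [htb_def]; linarith
  have hτpos : 0 < τ := by rw [hτ_def]; nlinarith
  have hτtb : tb ≤ τ - a := by rw [hτ_def, htb_def]; nlinarith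
  -- initial data
  have hlt : t - a^2 < ‖S‖ := by rw [← ht_def]; nlinarith
  obtain ⟨x₀, hx₀b, hx₀n⟩ := exists_ball_lt hlt
  have hSx₀ : S x₀ ≠ 0 := by
    intro h; rw [h, norm_zero] at hx₀n; linarith
  obtain ⟨f, hf1, hf2⟩ := exists_dual_vector ℝ (S x₀) (norm_ne_zero_iff.2 hSx₀)
  rw [RCLike.ofReal_real_eq_id, id] at hf2
  set h₀ : X →L[ℝ] ℝ := f.comp S with hh₀_def
  have hh₀x₀ : τ < h₀ x₀ := by
    have : h₀ x₀ = f (S x₀) := rfl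
    rw [this, hf2]; exact hx₀n
  have hh₀le : ∀ x : X, ‖x‖ ≤ 1 → h₀ x ≤ ‖h₀‖ := by
    intro x hx
    calc h₀ x ≤ |h₀ x| := le_abs_self _
      _ ≤ ‖h₀‖ * ‖x‖ := by simpa [Real.norm_eq_abs] using h₀.le_opNorm x
      _ ≤ ‖h₀‖ := by simpa using mul_le_mul_of_nonneg_left hx (norm_nonneg h₀)
  have hh₀pos : 0 < ‖h₀‖ := lt_of_lt_of_le (lt_trans hτpos hh₀x₀) (hh₀le x₀ hx₀b)
  set g₀ : X →L[ℝ] ℝ := ‖h₀‖⁻¹ • h₀ with hg₀_def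
  set al₀ : ℝ := ‖h₀‖⁻¹ * τ with hal₀_def
  have hg₀ : ‖g₀‖ = 1 := by
    rw [hg₀_def, norm_smul (α := ℝ) (β := X →L[ℝ] ℝ) ‖h₀‖⁻¹ h₀, norm_inv, norm_norm]
    exact inv_mul_cancel₀ hh₀pos.ne'
  have hal₀lt : al₀ < 1 := by
    rw [hal₀_def, show (1:ℝ) = ‖h₀‖⁻¹ * ‖h₀‖ from (inv_mul_cancel₀ hh₀pos.ne').symm]
    exact mul_lt_mul_of_pos_left (lt_of_lt_of_le hh₀x₀ (hh₀le x₀ hx₀b)) (inv_pos.2 hh₀pos)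
  have hmem₀ : ∀ x : X, x ∈ dslice g₀ al₀ ↔ (‖x‖ ≤ 1 ∧ τ < h₀ x) := by
    intro x
    constructor
    · rintro ⟨hx1, hx2⟩
      refine ⟨hx1, ?_⟩
      have : al₀ < ‖h₀‖⁻¹ * h₀ x := by
        simpa [hg₀_def, ContinuousLinearMap.smul_apply, smul_eq_mul] using hx2
      rw [hal₀_def] at this
      exact lt_of_mul_lt_mul_left this (by positivity)
    · rintro ⟨hx1, hx2⟩
      refine ⟨hx1, ?_⟩
      show al₀ < g₀ x
      have : g₀ x = ‖h₀‖⁻¹ * h₀ x := by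
        simp [hg₀_def, ContinuousLinearMap.smul_apply, smul_eq_mul]
      rw [this, hal₀_def]
      exact mul_lt_mul_of_pos_left hx2 (inv_pos.2 hh₀pos)
  have hslice0 : ∀ x ∈ dslice g₀ al₀, τ < f (S x) := by
    intro x hx
    exact ((hmem₀ x).1 hx).2
  have hvalid0 : DValid S f g₀ al₀ τ ⟨g₀, al₀, x₀, [S x₀]⟩ := by
    refine ⟨hg₀, hal₀lt, le_refl _, (hmem₀ x₀).2 ⟨hx₀b, hh₀x₀⟩, ?_⟩
    intro v hv
    have hv1 : v = S x₀ := by simpa using hv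
    subst hv1
    exact ⟨⟨x₀, hx₀b, rfl⟩, hslice0 x₀ ((hmem₀ x₀).2 ⟨hx₀b, hh₀x₀⟩)⟩
  -- the iteration
  have hstepex : ∀ (s : DStage X), DValid S f g₀ al₀ τ s →
      ∃ s', DValid S f g₀ al₀ τ s' ∧ DRel S tb a s s' :=
    fun s hs => step_exists hX hg₀ hal₀lt hslice0 ha0 ha1 htb s hs
  let step : {s : DStage X // DValid S f g₀ al₀ τ s} → {s : DStage X // DValid S f g₀ al₀ τ s} :=
    fun s => ⟨(hstepex s.1 s.2).choose, (hstepex s.1 s.2).choose_spec.1⟩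
  have hstep_rel : ∀ s, DRel S tb a s.1 (step s).1 := fun s => (hstepex s.1 s.2).choose_spec.2
  let st : ℕ → {s : DStage X // DValid S f g₀ al₀ τ s} :=
    fun k => step^[k] ⟨⟨g₀, al₀, x₀, [S x₀]⟩, hvalid0⟩
  have hst_succ : ∀ k, st (k+1) = step (st k) := by
    intro k
    show step^[k+1] _ = step (step^[k] _)
    rw [Function.iterate_succ_apply']
  have hrel : ∀ k, DRel S tb a (st k).1 (st (k+1)).1 := by
    intro k
    rw [hst_succ k]
    exact hstep_rel (st k)
  set xs : ℕ → X := fun k => (st k).1.pt with hxs_def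
  set vv : ℕ → X := fun k => S (xs k) with hvv_def
  have hmono : ∀ j k : ℕ, j ≤ k →
      dslice (st k).1.g (st k).1.al ⊆ dslice (st j).1.g (st j).1.al := by
    intro j k hjk
    induction k, hjk using Nat.le_induction with
    | base => exact le_refl _
    | succ k hjk ih => exact fun x hx => ih ((hrel k).1 hx)
  have hptk : ∀ k, xs k ∈ dslice (st k).1.g (st k).1.al := fun k => (st k).2.2.2.2.1
  have hballk : ∀ k, ‖xs k‖ ≤ 1 := fun k => (hptk k).1
  have hfv : ∀ k, τ < f (vv k) := fun k => hslice0 _ ((st k).2.2.2.1 (hptk k))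
  have hvs : ∀ k, ∀ u, u ∈ (st k).1.vs ↔ ∃ j ≤ k, u = vv j := by
    intro k
    induction k with
    | zero =>
      intro u
      have h0 : (st 0).1.vs = [S x₀] := rfl
      rw [h0]
      constructor
      · intro hu
        have : u = S x₀ := by simpa using hu
        exact ⟨0, le_refl 0, this⟩
      · rintro ⟨j, hj, rfl⟩
        interval_cases j
        simp [hvv_def, hxs_def]
        rfl
    | succ k ih =>
      intro u
      rw [(hrel k).2.1, List.mem_append]
      constructor
      · rintro (hu | hu)
        · obtain ⟨j, hj, rfl⟩ := (ih u).1 hu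
          exact ⟨j, le_trans hj (Nat.le_succ k), rfl⟩
        · have : u = S ((st (k+1)).1.pt) := by simpa using hu
          exact ⟨k+1, le_refl _, this⟩
      · rintro ⟨j, hj, rfl⟩
        rcases Nat.lt_or_ge j (k+1) with hj1 | hj1
        · exact Or.inl ((ih _).2 ⟨j, Nat.lt_succ_iff.1 hj1, rfl⟩)
        · have : j = k+1 := le_antisymm hj hj1
          subst this
          exact Or.inr (by simp [hvv_def, hxs_def])
  -- weak cluster point
  have hqK : ∀ k, (toWeakSpaceCLM ℝ X) (vv k) ∈
      closure ((toWeakSpaceCLM ℝ X) '' (S '' Metric.closedBall 0 1)) := by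
    intro k
    apply subset_closure
    exact ⟨S (xs k), ⟨xs k, by
      rw [Metric.mem_closedBall, dist_zero_right]; exact hballk k, rfl⟩, rfl⟩
  haveI : (Filter.map (fun k => (toWeakSpaceCLM ℝ X) (vv k)) (Filter.atTop : Filter ℕ)).NeBot :=
    Filter.map_neBot
  have hle : Filter.map (fun k => (toWeakSpaceCLM ℝ X) (vv k)) (Filter.atTop : Filter ℕ) ≤
      𝓟 (closure ((toWeakSpaceCLM ℝ X) '' (S '' Metric.closedBall 0 1))) := by
    rw [Filter.le_principal_iff, Filter.mem_map]
    exact Filter.univ_mem' hqK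
  obtain ⟨vt, hvtK, hclus⟩ := hSwc.exists_clusterPt hle
  set vi : X := (toWeakSpace ℝ X).symm vt with hvi_def
  have hWsymm : ∀ x : X, (toWeakSpace ℝ X).symm ((toWeakSpaceCLM ℝ X) x) = x := fun x =>
    LinearEquiv.symm_apply_apply _ _
  have hfcont : Continuous fun w : WeakSpace ℝ X => f ((toWeakSpace ℝ X).symm w) :=
    WeakBilin.eval_continuous ((topDualPairing ℝ X).flip) f
  have hfvi : τ ≤ f vi := by
    have hCfclosed : IsClosed {w : WeakSpace ℝ X | τ ≤ f ((toWeakSpace ℝ X).symm w)} :=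
      isClosed_le continuous_const hfcont
    have hCfmem : ∀ k, (toWeakSpaceCLM ℝ X) (vv k) ∈
        {w : WeakSpace ℝ X | τ ≤ f ((toWeakSpace ℝ X).symm w)} := by
      intro k
      show τ ≤ f ((toWeakSpace ℝ X).symm ((toWeakSpaceCLM ℝ X) (vv k)))
      rw [hWsymm]
      exact (hfv k).le
    have h1 : ClusterPt vt (𝓟 {w : WeakSpace ℝ X | τ ≤ f ((toWeakSpace ℝ X).symm w)}) :=
      hclus.mono (by
        rw [Filter.le_principal_iff, Filter.mem_map]
        exact Filter.univ_mem' hCfmem)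
    have h2 := mem_closure_iff_clusterPt.2 h1
    rwa [hCfclosed.closure_eq] at h2
  have hMazur : ∀ m : ℕ, vi ∈ closure (convexHull ℝ (vv '' Set.Ici m)) := by
    intro m
    have hWC : IsClosed ((toWeakSpace ℝ X) '' closure (convexHull ℝ (vv '' Set.Ici m))) := by
      rw [(convex_convexHull ℝ _).toWeakSpace_closure ℝ]
      exact isClosed_closure
    have hmem : ∀ k ≥ m, (toWeakSpaceCLM ℝ X) (vv k) ∈
        (toWeakSpace ℝ X) '' closure (convexHull ℝ (vv '' Set.Ici m)) := by
      intro k hk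
      exact ⟨vv k, subset_closure (subset_convexHull ℝ _ ⟨k, hk, rfl⟩), rfl⟩
    have h1 : ClusterPt vt
        (𝓟 ((toWeakSpace ℝ X) '' closure (convexHull ℝ (vv '' Set.Ici m)))) :=
      hclus.mono (by
        rw [Filter.le_principal_iff, Filter.mem_map]
        exact Filter.mem_of_superset (Filter.mem_atTop m) (fun k hk => hmem k hk))
    have h2 := mem_closure_iff_clusterPt.2 h1
    rw [hWC.closure_eq] at h2
    obtain ⟨c, hc, hceq⟩ := h2
    have hcvi : c = vi := by
      rw [hvi_def, ← hceq, LinearEquiv.symm_apply_apply]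
    rwa [← hcvi]
  -- first approximation
  obtain ⟨c1, hc1mem, hc1d⟩ := Metric.mem_closure_iff.1 (hMazur 0) a ha0
  rw [dist_eq_norm] at hc1d
  rw [convexHull_eq] at hc1mem
  obtain ⟨ι, tf, wt, zf, hw0, hw1, hz, hcm⟩ := hc1mem
  have hJ : ∀ i ∈ tf, ∃ j : ℕ, vv j = zf i := by
    intro i hi
    obtain ⟨j, _, hj2⟩ := hz i hi
    exact ⟨j, hj2⟩
  classical
  set J : ι → ℕ := fun i => if h : i ∈ tf then (hJ i h).choose else 0 with hJ_def
  have hJspec : ∀ i ∈ tf, vv (J i) = zf i := by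
    intro i hi
    rw [hJ_def]
    simp only [dif_pos hi]
    exact (hJ i hi).choose_spec
  set M₁ := tf.sup J with hM₁_def
  have hc1hull : c1 ∈ convexHull ℝ {u | u ∈ (st M₁).1.vs} := by
    rw [← hcm]
    apply Finset.centerMass_mem_convexHull tf hw0 (by rw [hw1]; norm_num)
    intro i hi
    show zf i ∈ {u | u ∈ (st M₁).1.vs}
    have : zf i ∈ (st M₁).1.vs := by
      rw [hvs M₁ (zf i)]
      refine ⟨J i, ?_, (hJspec i hi).symm⟩
      rw [hM₁_def]
      exact Finset.le_sup hi
    exact this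
  have hfv_le_norm : ∀ u : X, f u ≤ ‖u‖ := by
    intro u
    calc f u ≤ |f u| := le_abs_self _
      _ ≤ ‖f‖ * ‖u‖ := by simpa [Real.norm_eq_abs] using f.le_opNorm u
      _ = ‖u‖ := by rw [hf1, one_mul]
  have hvi_norm : τ ≤ ‖vi‖ := le_trans hfvi (hfv_le_norm vi)
  have hc1norm : τ - a ≤ ‖c1‖ := by
    have h2 : ‖vi‖ - ‖c1‖ ≤ ‖vi - c1‖ := norm_sub_norm_le vi c1
    linarith
  have hc1tb : tb ≤ ‖c1‖ := le_trans hτtb hc1norm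
  have hc1ne : c1 ≠ 0 := by
    intro h
    rw [h, norm_zero] at hc1tb
    linarith
  have hc1le : ‖c1‖ ≤ t := by
    have hsubball : {u | u ∈ (st M₁).1.vs} ⊆ Metric.closedBall (0:X) t := by
      intro u hu
      obtain ⟨⟨x', hx'1, rfl⟩, _⟩ := (st M₁).2.2.2.2.2 u hu
      rw [Metric.mem_closedBall, dist_zero_right]
      calc ‖S x'‖ ≤ ‖S‖ * ‖x'‖ := S.le_opNorm x'
        _ ≤ t := by rw [← ht_def]; nlinarith [norm_nonneg S]
    have h3 := convexHull_min hsubball (convex_closedBall _ _) hc1hull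
    rwa [Metric.mem_closedBall, dist_zero_right] at h3
  -- second approximation
  obtain ⟨c2, hc2mem, hc2d⟩ := Metric.mem_closure_iff.1 (hMazur (M₁+1)) a ha0
  rw [dist_eq_norm] at hc2d
  rw [convexHull_eq] at hc2mem
  obtain ⟨ι₂, tf₂, wt₂, zf₂, hw0₂, hw1₂, hz₂, hcm₂⟩ := hc2mem
  have hJ₂ : ∀ i ∈ tf₂, ∃ j : ℕ, M₁ + 1 ≤ j ∧ vv j = zf₂ i := by
    intro i hi
    obtain ⟨j, hj1, hj2⟩ := hz₂ i hi
    exact ⟨j, hj1, hj2⟩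
  set J₂ : ι₂ → ℕ := fun i => if h : i ∈ tf₂ then (hJ₂ i h).choose else M₁+1 with hJ₂_def
  have hJ₂spec : ∀ i ∈ tf₂, M₁ + 1 ≤ J₂ i ∧ vv (J₂ i) = zf₂ i := by
    intro i hi
    rw [hJ₂_def]
    simp only [dif_pos hi]
    exact (hJ₂ i hi).choose_spec
  set z : X := ∑ i ∈ tf₂, wt₂ i • xs (J₂ i) with hz_def2
  have hSz : S z = c2 := by
    rw [← hcm₂, Finset.centerMass_eq_of_sum_1 _ _ hw1₂, hz_def2, map_sum]
    apply Finset.sum_congr rfl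
    intro i hi
    rw [map_smul]
    congr 1
    exact (hJ₂spec i hi).2
  have hzslice : z ∈ dslice (st (M₁+1)).1.g (st (M₁+1)).1.al := by
    rw [hz_def2]
    apply (dslice_convex _ _).sum_mem hw0₂ hw1₂
    intro i hi
    exact hmono (M₁+1) (J₂ i) (hJ₂spec i hi).1 (hptk (J₂ i))
  have hzb : ‖z‖ ≤ 1 := hzslice.1
  have hanti := (hrel M₁).2.2 z hzslice c1 hc1hull hc1tb hc1ne
  have hld := lemD hzb hc1ne (by linarith : (0:ℝ) ≤ 2*a) hanti
  have hmax : max 1 ‖c1‖ ≤ 1 + t := by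
    apply max_le
    · linarith
    · linarith
  refine ⟨z, hzb, ?_⟩
  have htri1 : ‖z - c1‖ ≤ ‖z - c2‖ + ‖vi - c2‖ + ‖vi - c1‖ := by
    calc ‖z - c1‖ = ‖(z - c2) + (c2 - vi) + (vi - c1)‖ := by congr 1; abel
      _ ≤ ‖(z - c2) + (c2 - vi)‖ + ‖vi - c1‖ := norm_add_le _ _
      _ ≤ ‖z - c2‖ + ‖c2 - vi‖ + ‖vi - c1‖ := by
          have := norm_add_le (z - c2) (c2 - vi)
          linarith
      _ = ‖z - c2‖ + ‖vi - c2‖ + ‖vi - c1‖ := by rw [norm_sub_rev c2 vi]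
  have hfin : 1 + ‖c1‖ - 2*a * max 1 ‖c1‖ ≤ ‖z - c1‖ := hld
  have hb1 : 2*a * max 1 ‖c1‖ ≤ 2*a*(1+t) := by nlinarith
  calc 1 + ‖S‖ - ε = 1 + t - ε := by rw [ht_def]
    _ ≤ 1 + t - a*(6+2*t) := by linarith
    _ ≤ ‖z - S z‖ := by
        rw [hSz]
        have h9 : τ - a = t - a^2 - a := by rw [hτ_def]
        have haa : a^2 ≤ a := by nlinarith
        linarith [hc1norm, hc1d, hc2d, htri1, hfin, hb1]
  
end Core

lemma t2Weak : T2Space (WeakSpace ℝ X) := by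
  have hinj : Function.Injective ⇑((topDualPairing ℝ X).flip) := by
    intro x y hxy
    by_contra hne
    obtain ⟨g, hg1, hg2⟩ := exists_dual_vector ℝ (x - y) (norm_ne_zero_iff.2 (sub_ne_zero.2 hne))
    rw [RCLike.ofReal_real_eq_id, id] at hg2
    have h1 : (topDualPairing ℝ X).flip x g = (topDualPairing ℝ X).flip y g := by rw [hxy]
    simp only [LinearMap.flip_apply, topDualPairing_apply] at h1
    have h2 : g (x - y) = 0 := by rw [map_sub, h1, sub_self]
    rw [hg2] at h2
    exact (norm_pos_iff.2 (sub_ne_zero.2 hne)).ne' h2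
  exact (WeakBilin.isEmbedding hinj).t2Space

lemma weaklyCompactOp_sum {Γ : Type} (T : Γ → X →L[ℝ] X) (hT : ∀ n, WeaklyCompactOp (T n))
    (A : Finset Γ) : WeaklyCompactOp (∑ n ∈ A, T n) := by
  classical
  haveI : T2Space (WeakSpace ℝ X) := t2Weak
  have hKcomp : ∀ B : Finset Γ,
      IsCompact (∑ n ∈ B, closure ((toWeakSpaceCLM ℝ X) '' (T n '' Metric.closedBall 0 1))) := by
    intro B
    induction B using Finset.induction_on with
    | empty =>
      rw [Finset.sum_empty]
      have h0 : (0 : Set (WeakSpace ℝ X)) = {0} := rfl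
      rw [h0]
      exact isCompact_singleton
    | insert _ _ hnot ih =>
      rename_i n B'
      rw [Finset.sum_insert hnot]
      exact (hT n).add ih
  have hsub : (toWeakSpaceCLM ℝ X) '' ((∑ n ∈ A, T n) '' Metric.closedBall 0 1) ⊆
      ∑ n ∈ A, closure ((toWeakSpaceCLM ℝ X) '' (T n '' Metric.closedBall 0 1)) := by
    rintro - ⟨-, ⟨x, hx, rfl⟩, rfl⟩
    rw [Set.mem_finset_sum]
    refine ⟨fun n => (toWeakSpaceCLM ℝ X) (T n x), fun {n} _ =>
      subset_closure ⟨T n x, ⟨x, hx, rfl⟩, rfl⟩, ?_⟩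
    simp only [ContinuousLinearMap.coe_sum', Finset.sum_apply, map_sum]
  unfold WeaklyCompactOp
  rw [ContinuousLinearMap.coe_sum']
  exact IsCompact.of_isClosed_subset (hKcomp A) isClosed_closure
    (closure_minimal hsub (hKcomp A).isClosed)

lemma weaklyCompactOp_smulRight (φ : X →L[ℝ] ℝ) (e : X) :
    WeaklyCompactOp (φ.smulRight e) := by
  haveI : T2Space (WeakSpace ℝ X) := t2Weak
  have hJ : IsCompact ((fun r : ℝ => r • e) '' Set.Icc (-‖φ‖) ‖φ‖) :=
    isCompact_Icc.image (continuous_id.smul continuous_const)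
  have hWJ : IsCompact ((toWeakSpaceCLM ℝ X) '' ((fun r : ℝ => r • e) '' Set.Icc (-‖φ‖) ‖φ‖)) :=
    hJ.image (map_continuous _)
  have hsub : (toWeakSpaceCLM ℝ X) '' ((φ.smulRight e) '' Metric.closedBall 0 1) ⊆
      (toWeakSpaceCLM ℝ X) '' ((fun r : ℝ => r • e) '' Set.Icc (-‖φ‖) ‖φ‖) := by
    rintro - ⟨-, ⟨x, hx, rfl⟩, rfl⟩
    refine ⟨φ x • e, ⟨φ x, ?_, rfl⟩, by rw [ContinuousLinearMap.smulRight_apply]⟩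
    rw [Metric.mem_closedBall, dist_zero_right] at hx
    have h1 : |φ x| ≤ ‖φ‖ := by
      calc |φ x| ≤ ‖φ‖ * ‖x‖ := by simpa [Real.norm_eq_abs] using φ.le_opNorm x
        _ ≤ ‖φ‖ := by simpa using mul_le_mul_of_nonneg_left hx (norm_nonneg φ)
    exact Set.mem_Icc.2 (abs_le.1 h1)
  exact IsCompact.of_isClosed_subset hWJ isClosed_closure
    (closure_minimal hsub hWJ.isClosed)

lemma partial_sums_bounded {Γ : Type} [CompleteSpace X] (T : Γ → X →L[ℝ] X)
    (hsum : ∀ x : X, HasSum (fun n => T n x) x) :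
    ∃ C : ℝ, 0 ≤ C ∧ ∀ A : Finset Γ, ‖∑ n ∈ A, T n‖ ≤ C := by
  classical
  have hpt : ∀ x : X, ∃ C, ∀ A : Finset Γ, ‖(∑ n ∈ A, T n) x‖ ≤ C := by
    intro x
    have h1 : ∀ᶠ A in (Filter.atTop : Filter (Finset Γ)),
        ∑ n ∈ A, T n x ∈ Metric.ball x 1 := (hsum x) (Metric.ball_mem_nhds x one_pos)
    rw [Filter.eventually_atTop] at h1
    obtain ⟨A₀, hA₀⟩ := h1
    refine ⟨1 + ‖x‖ + ∑ n ∈ A₀, ‖T n x‖, ?_⟩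
    intro A
    have hsplit : ∑ n ∈ A ∪ A₀, T n x = (∑ n ∈ A, T n x) + ∑ n ∈ A₀ \ A, T n x := by
      rw [← Finset.sum_union Finset.disjoint_sdiff, Finset.union_sdiff_self_eq_union]
    have h2 : ‖∑ n ∈ A ∪ A₀, T n x - x‖ < 1 := by
      have := hA₀ (A ∪ A₀) Finset.subset_union_right
      rwa [Metric.mem_ball, dist_eq_norm] at this
    have h3 : ‖∑ n ∈ A₀ \ A, T n x‖ ≤ ∑ n ∈ A₀, ‖T n x‖ :=
      le_trans (norm_sum_le _ _) (Finset.sum_le_sum_of_subset_of_nonneg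
        (Finset.sdiff_subset) (fun n _ _ => norm_nonneg _))
    have h4 : (∑ n ∈ A, T n) x = ∑ n ∈ A, T n x := by
      rw [ContinuousLinearMap.sum_apply]
    rw [h4]
    have h5 : ∑ n ∈ A, T n x = (∑ n ∈ A ∪ A₀, T n x - x) + x - ∑ n ∈ A₀ \ A, T n x := by
      rw [hsplit]; abel
    rw [h5]
    calc ‖(∑ n ∈ A ∪ A₀, T n x - x) + x - ∑ n ∈ A₀ \ A, T n x‖ ≤
        ‖(∑ n ∈ A ∪ A₀, T n x - x) + x‖ + ‖∑ n ∈ A₀ \ A, T n x‖ := norm_sub_le _ _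
      _ ≤ ‖∑ n ∈ A ∪ A₀, T n x - x‖ + ‖x‖ + ‖∑ n ∈ A₀ \ A, T n x‖ := by
          have := norm_add_le (∑ n ∈ A ∪ A₀, T n x - x) x
          linarith
      _ ≤ 1 + ‖x‖ + ∑ n ∈ A₀, ‖T n x‖ := by linarith
  obtain ⟨C', hC'⟩ := banach_steinhaus hpt
  exact ⟨max C' 0, le_max_right _ _, fun A => le_trans (hC' A) (le_max_left _ _)⟩

lemma comp_bound {Γ : Type} (T : Γ → X →L[ℝ] X)
    (hsum : ∀ x : X, HasSum (fun n => T n x) x) {c : ℝ}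
    (hc : ∀ A : Finset Γ, ‖∑ n ∈ A, T n‖ ≤ c) (A : Finset Γ) (x : X) :
    ‖x - (∑ n ∈ A, T n) x‖ ≤ c * ‖x‖ := by
  classical
  have h4 : (∑ n ∈ A, T n) x = ∑ n ∈ A, T n x := ContinuousLinearMap.sum_apply _ _ _
  have h1 : HasSum (fun n : {n // n ∉ A} => T n x) (x - ∑ n ∈ A, T n x) := by
    apply (Finset.hasSum_compl_iff (f := fun n => T n x) A).2
    rw [sub_add_cancel]
    exact hsum x
  have hb : ∀ B : Finset {n // n ∉ A}, ‖∑ i ∈ B, T i x‖ ≤ c * ‖x‖ := by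
    intro B
    have he : ∑ i ∈ B, T (↑i) x = (∑ n ∈ B.map (Function.Embedding.subtype _), T n) x := by
      rw [ContinuousLinearMap.sum_apply, Finset.sum_map]
      rfl
    rw [he]
    exact le_trans ((∑ n ∈ B.map (Function.Embedding.subtype _), T n).le_opNorm x)
      (mul_le_mul_of_nonneg_right (hc _) (norm_nonneg x))
  have h2 : Filter.Tendsto (fun B : Finset {n // n ∉ A} => ∑ i ∈ B, T i x)
      Filter.atTop (nhds (x - ∑ n ∈ A, T n x)) := h1
  have h3 : ‖x - ∑ n ∈ A, T n x‖ ≤ c * ‖x‖ :=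
    le_of_tendsto h2.norm (Filter.Eventually.of_forall hb)
  rw [h4]
  exact h3


end Stmt13

end Auxiliary

/-- if `X` has the Daugavet property, the identity on `X` is not a pointwise
unconditionally convergent series of weakly compact operators; in particular `X` has no
unconditional (Schauder) basis. -/
theorem stmt13 (X : Type*) [NormedAddCommGroup X] [NormedSpace ℝ X] [CompleteSpace X]
    (hX : DaugavetProperty X) :
    (¬ ∃ (Γ : Type) (T : Γ → (X →L[ℝ] X)),
        (∀ n : Γ, WeaklyCompactOp (T n)) ∧ ∀ x : X, HasSum (fun n : Γ => T n x) x) ∧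
    (¬ ∃ (e : ℕ → X) (φ : ℕ → (X →L[ℝ] ℝ)),
        (∀ i j : ℕ, φ i (e j) = if i = j then 1 else 0) ∧
        ∀ x : X, HasSum (fun n : ℕ => φ n x • e n) x) := by
  classical
  have hmain : ¬ ∃ (Γ : Type) (T : Γ → (X →L[ℝ] X)),
      (∀ n : Γ, WeaklyCompactOp (T n)) ∧ ∀ x : X, HasSum (fun n : Γ => T n x) x := by
    rintro ⟨Γ, T, hwc, hsum⟩
    obtain ⟨C, hC0, hC⟩ := Stmt13.partial_sums_bounded T hsum
    set c := sSup (Set.range fun A : Finset Γ => ‖∑ n ∈ A, T n‖) with hc_def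
    have hbdd : BddAbove (Set.range fun A : Finset Γ => ‖∑ n ∈ A, T n‖) := by
      refine ⟨C, ?_⟩
      rintro - ⟨A, rfl⟩
      exact hC A
    have hne : (Set.range fun A : Finset Γ => ‖∑ n ∈ A, T n‖).Nonempty := ⟨_, ⟨∅, rfl⟩⟩
    have hcle : ∀ A : Finset Γ, ‖∑ n ∈ A, T n‖ ≤ c := fun A => le_csSup hbdd ⟨A, rfl⟩
    obtain ⟨y, hy⟩ := Stmt13.exists_unit hX
    have h34 : (3:ℝ)/4 ≤ c := by
      have h1 : ∀ᶠ A in (Filter.atTop : Filter (Finset Γ)),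
          ∑ n ∈ A, T n y ∈ Metric.ball y (1/4) :=
        (hsum y) (Metric.ball_mem_nhds y (by norm_num))
      rw [Filter.eventually_atTop] at h1
      obtain ⟨A₁, hA₁⟩ := h1
      have h2 := hA₁ A₁ (le_refl _)
      rw [Metric.mem_ball, dist_eq_norm] at h2
      have h3 : (3:ℝ)/4 ≤ ‖(∑ n ∈ A₁, T n) y‖ := by
        have h4 : (∑ n ∈ A₁, T n) y = ∑ n ∈ A₁, T n y :=
          ContinuousLinearMap.sum_apply _ _ _
        rw [h4]
        rw [norm_sub_rev] at h2
        have h5 := norm_sub_norm_le y (∑ n ∈ A₁, T n y)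
        rw [hy] at h5
        linarith
      have h5 : ‖(∑ n ∈ A₁, T n) y‖ ≤ ‖∑ n ∈ A₁, T n‖ := by
        have h6 := (∑ n ∈ A₁, T n).le_opNorm y
        rw [hy, mul_one] at h6
        exact h6
      linarith [hcle A₁]
    obtain ⟨-, ⟨A, rfl⟩, hA⟩ := exists_lt_of_lt_csSup hne
      (show c - 4⁻¹ < c by linarith)
    have hSAwc := Stmt13.weaklyCompactOp_sum T hwc A
    have hpos : 0 < ‖∑ n ∈ A, T n‖ := by linarith
    obtain ⟨z, hz1, hz2⟩ := Stmt13.daugavet_aux hX hSAwc hpos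
      (show (0:ℝ) < 4⁻¹ by norm_num)
    have hub := Stmt13.comp_bound T hsum hcle A z
    have hcz : c * ‖z‖ ≤ c := by nlinarith
    linarith
  refine ⟨hmain, ?_⟩
  rintro ⟨e, φ, hbi, hsum⟩
  exact hmain ⟨ℕ, fun n => (φ n).smulRight (e n),
    fun n => Stmt13.weaklyCompactOp_smulRight _ _,
    fun x => by simpa [ContinuousLinearMap.smulRight_apply] using hsum x⟩
end

section
/- Let μ be Lebesgue measure on [0,1] and g ∈ L¹[0,1] with ‖g‖ = 1. The rank-one operator T : L¹[0,1] → L¹[0,1], T(f) = (∫ f dμ) · g, satisfies ‖Id + T‖ = 2 = 1 + ‖T‖. -/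
open MeasureTheory

/-- Lebesgue measure on `[0,1]`. -/
noncomputable def μ01 : Measure ℝ := volume.restrict (Set.Icc (0:ℝ) 1)

lemma mu01_Icc {δ : ℝ} (h0 : 0 ≤ δ) (h1 : δ ≤ 1) :
    μ01 (Set.Icc 0 δ) = ENNReal.ofReal δ := by
  rw [μ01, Measure.restrict_apply measurableSet_Icc,
    Set.inter_eq_left.2 (Set.Icc_subset_Icc le_rfl h1), Real.volume_Icc, sub_zero]

noncomputable def fδ (δ : ℝ) (h0 : 0 < δ) (h1 : δ ≤ 1) : Lp ℝ 1 μ01 :=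
  indicatorConstLp 1 measurableSet_Icc
    (by rw [mu01_Icc h0.le h1]; exact ENNReal.ofReal_ne_top) (δ⁻¹ : ℝ)

lemma fδ_norm (δ : ℝ) (h0 : 0 < δ) (h1 : δ ≤ 1) : ‖fδ δ h0 h1‖ = 1 := by
  rw [fδ, norm_indicatorConstLp one_ne_zero ENNReal.one_ne_top, measureReal_def, mu01_Icc h0.le h1,
    ENNReal.toReal_ofReal h0.le]
  rw [Real.norm_eq_abs, abs_of_pos (inv_pos.2 h0), ENNReal.toReal_one]
  field_simp
  simp

lemma fδ_integral (δ : ℝ) (h0 : 0 < δ) (h1 : δ ≤ 1) :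
    ∫ x, fδ δ h0 h1 x ∂μ01 = 1 := by
  rw [fδ, integral_indicatorConstLp measurableSet_Icc, measureReal_def, mu01_Icc h0.le h1,
    ENNReal.toReal_ofReal h0.le, smul_eq_mul, mul_inv_cancel₀ h0.ne']

lemma integralCLM_eq (f : Lp ℝ 1 μ01) :
    (L1.integralCLM : Lp ℝ 1 μ01 →L[ℝ] ℝ) f = ∫ x, f x ∂μ01 :=
  (L1.integral_eq f).symm.trans (L1.integral_eq_integral f)

lemma norm_add_ge (g : Lp ℝ 1 μ01) (δ : ℝ) (h0 : 0 < δ) (h1 : δ ≤ 1) :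
    ‖fδ δ h0 h1 + g‖ ≥ 1 + ‖g‖ - 2 * ∫ x in Set.Icc (0:ℝ) δ, ‖g x‖ ∂μ01 := by
  set f := fδ δ h0 h1 with hf
  set s : Set ℝ := Set.Icc (0:ℝ) δ with hs
  have hsm : MeasurableSet s := measurableSet_Icc
  have hgi : Integrable (fun x => g x) μ01 := L1.integrable_coeFn g
  have hfi : Integrable (fun x => f x) μ01 := L1.integrable_coeFn f
  -- a.e. equality of coeFn of sum
  have hae : (fun x => ‖(f + g) x‖) =ᵐ[μ01] fun x => ‖f x + g x‖ :=
    (Lp.coeFn_add f g).mono (fun x hx => by simp only [hx]; rfl)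
  have h1' : ‖f + g‖ = ∫ x, ‖f x + g x‖ ∂μ01 := by
    rw [L1.norm_eq_integral_norm, integral_congr_ae hae]
  have hFGi : Integrable (fun x => ‖f x + g x‖) μ01 := (hfi.add hgi).norm
  have hGn : Integrable (fun x => ‖g x‖) μ01 := hgi.norm
  have hFn : Integrable (fun x => ‖f x‖) μ01 := hfi.norm
  -- f vanishes a.e. off s
  have hf0' : ∀ᵐ x ∂μ01, x ∉ s → f x = 0 := indicatorConstLp_coeFn_notMem
  have hf0 : ∀ᵐ x ∂(μ01.restrict sᶜ), f x = 0 := by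
    refine (ae_restrict_iff' hsm.compl).2 (hf0'.mono fun x hx hxs => hx hxs)
  have hsplit : ∫ x, ‖f x + g x‖ ∂μ01
      = (∫ x in s, ‖f x + g x‖ ∂μ01) + ∫ x in sᶜ, ‖f x + g x‖ ∂μ01 :=
    (integral_add_compl hsm hFGi).symm
  have hcompl : ∫ x in sᶜ, ‖f x + g x‖ ∂μ01 = ∫ x in sᶜ, ‖g x‖ ∂μ01 := by
    refine integral_congr_ae (hf0.mono fun x hx => ?_)
    dsimp only; rw [hx, zero_add]
  have hlow : (∫ x in s, ‖f x‖ ∂μ01) - (∫ x in s, ‖g x‖ ∂μ01)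
      ≤ ∫ x in s, ‖f x + g x‖ ∂μ01 := by
    rw [← integral_sub hFn.restrict hGn.restrict]
    refine integral_mono_ae (hFn.restrict.sub hGn.restrict) hFGi.restrict
      (Filter.Eventually.of_forall fun x => ?_)
    have := norm_le_add_norm_add (f x) (g x)
    simp only [Pi.sub_apply]
    linarith
  have hfs : ∫ x in s, ‖f x‖ ∂μ01 = 1 := by
    have h0' : ∫ x in sᶜ, ‖f x‖ ∂μ01 = 0 :=
      integral_eq_zero_of_ae (hf0.mono fun x hx => by simp [hx])
    have := integral_add_compl hsm hFn
    rw [h0', add_zero] at this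
    rw [this, ← L1.norm_eq_integral_norm, hf, fδ_norm]
  have hgs : ∫ x in sᶜ, ‖g x‖ ∂μ01 = ‖g‖ - ∫ x in s, ‖g x‖ ∂μ01 := by
    have := integral_add_compl hsm hGn
    rw [← L1.norm_eq_integral_norm] at this
    linarith
  rw [ge_iff_le, h1', hsplit, hcompl, hgs]
  linarith


lemma small_integral (g : Lp ℝ 1 μ01) {ε : ℝ} (hε : 0 < ε) :
    ∃ δ : ℝ, 0 < δ ∧ δ ≤ 1 ∧ ∫ x in Set.Icc (0:ℝ) δ, ‖g x‖ ∂μ01 < ε := by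
  set s : ℕ → Set ℝ := fun n => Set.Icc (0:ℝ) (1 / (n + 1)) with hsdef
  have hδ0 : ∀ n : ℕ, (0:ℝ) < 1 / (n + 1) := fun n => by positivity
  have hδ1 : ∀ n : ℕ, (1:ℝ) / (n + 1) ≤ 1 := fun n => by
    rw [div_le_one (by positivity)]
    exact le_add_of_nonneg_left (Nat.cast_nonneg n)
  have hμ : Filter.Tendsto (μ01 ∘ s) Filter.atTop (nhds 0) := by
    have : (μ01 ∘ s) = fun n : ℕ => ENNReal.ofReal (1 / (n + 1)) := by
      funext n; exact mu01_Icc (hδ0 n).le (hδ1 n)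
    rw [this]
    have h0 : (0 : ENNReal) = ENNReal.ofReal 0 := by simp
    rw [h0]
    exact ENNReal.tendsto_ofReal tendsto_one_div_add_atTop_nhds_zero_nat
  have hgi : Integrable (fun x => ‖g x‖) μ01 := (L1.integrable_coeFn g).norm
  have := hgi.tendsto_setIntegral_nhds_zero hμ
  have h2 := (this.eventually (eventually_lt_nhds hε)).exists
  obtain ⟨n, hn⟩ := h2
  exact ⟨1 / (n + 1), hδ0 n, hδ1 n, hn⟩

lemma norm_integralCLM_apply_le (f : Lp ℝ 1 μ01) :
    ‖(L1.integralCLM : Lp ℝ 1 μ01 →L[ℝ] ℝ) f‖ ≤ ‖f‖ := by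
  rw [← L1.integral_eq]
  exact L1.norm_integral_le f

/-- for `g ∈ L¹[0,1]` with `‖g‖ = 1`, the rank-one operator
`T f = (∫ f dμ) · g` satisfies the Daugavet equation `‖Id + T‖ = 2 = 1 + ‖T‖`. -/
theorem stmt16 (g : Lp ℝ 1 μ01) (hg : ‖g‖ = 1) :
    ‖ContinuousLinearMap.id ℝ (Lp ℝ 1 μ01) +
        (L1.integralCLM : Lp ℝ 1 μ01 →L[ℝ] ℝ).smulRight g‖ = 2 ∧
    ‖(L1.integralCLM : Lp ℝ 1 μ01 →L[ℝ] ℝ).smulRight g‖ = 1 := by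
  set T := (L1.integralCLM : Lp ℝ 1 μ01 →L[ℝ] ℝ).smulRight g with hT
  have hTf : ∀ f : Lp ℝ 1 μ01, T f = (∫ x, f x ∂μ01) • g := fun f => by
    rw [hT, ContinuousLinearMap.smulRight_apply, integralCLM_eq]
  have hT_le : ‖T‖ ≤ 1 := by
    refine ContinuousLinearMap.opNorm_le_bound _ zero_le_one fun f => ?_
    rw [hT, ContinuousLinearMap.smulRight_apply, norm_smul, hg, mul_one, one_mul]
    exact norm_integralCLM_apply_le f
  have hTg : T (fδ 1 one_pos le_rfl) = g := by
    rw [hTf, fδ_integral, one_smul]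
  have hT_ge : (1:ℝ) ≤ ‖T‖ := by
    have := T.le_opNorm (fδ 1 one_pos le_rfl)
    rwa [hTg, hg, fδ_norm, mul_one] at this
  have hTnorm : ‖T‖ = 1 := le_antisymm hT_le hT_ge
  refine ⟨?_, hTnorm⟩
  set A := ContinuousLinearMap.id ℝ (Lp ℝ 1 μ01) + T with hA
  have hA_le : ‖A‖ ≤ 2 := by
    refine ContinuousLinearMap.opNorm_le_bound _ (by norm_num) fun f => ?_
    rw [hA, ContinuousLinearMap.add_apply, ContinuousLinearMap.id_apply]
    calc ‖f + T f‖ ≤ ‖f‖ + ‖T f‖ := norm_add_le _ _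
      _ ≤ ‖f‖ + ‖T‖ * ‖f‖ := by linarith [T.le_opNorm f]
      _ ≤ ‖f‖ + 1 * ‖f‖ := by nlinarith [norm_nonneg f]
      _ = 2 * ‖f‖ := by ring
  have hA_ge : (2:ℝ) ≤ ‖A‖ := by
    refine le_of_forall_pos_le_add fun ε hε => ?_
    obtain ⟨δ, h0, h1, hsmall⟩ := small_integral g (half_pos hε)
    set f := fδ δ h0 h1 with hf
    have hAf : A f = f + g := by
      rw [hA, ContinuousLinearMap.add_apply, ContinuousLinearMap.id_apply, hTf,
        hf, fδ_integral, one_smul]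
    have h2 := A.le_opNorm f
    rw [hAf, hf, fδ_norm, mul_one] at h2
    have h3 := norm_add_ge g δ h0 h1
    rw [hg] at h3
    rw [← hf] at h3
    linarith
  exact le_antisymm hA_le hA_ge
end
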